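/- arXiv:2203.04182 — 6 statements merged into one kernel-verified Lean document; each statement's English description precedes it below -/
import Mathlib

section
/- A permutation π of [n] is a forest permutation if and only if π avoids both the pattern 321 and the pattern 3412. -/
/-- The permutation graph of a permutation `π` of `Fin n`: there is an edge between `i` and `j`
for every inversion, i.e. every pair `i < j` with `π i > π j`. -/
def permGraph {n : ℕ} (π : Equiv.Perm (Fin n)) : SimpleGraph (Fin n) where
  Adj i j := (i < j ∧ π j < π i) ∨ (j < i ∧ π i < π j)
  symm := ⟨by intro i j h; tauto⟩
  loopless := ⟨by intro i h; rcases h with ⟨h, _⟩ | ⟨h, _⟩ <;> exact lt_irrefl _ h⟩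

/-- A forest permutation: its permutation graph is acyclic. -/
def IsForestPerm {n : ℕ} (π : Equiv.Perm (Fin n)) : Prop := (permGraph π).IsAcyclic

/-- The number of occurrences of the pattern `σ` in the permutation `π`. -/
noncomputable def occ {m n : ℕ} (σ : Equiv.Perm (Fin m)) (π : Equiv.Perm (Fin n)) : ℕ :=
  Set.ncard {f : Fin m → Fin n |
    StrictMono f ∧ ∀ j k : Fin m, π (f j) < π (f k) ↔ σ j < σ k}

/-- The pattern 321. -/
def perm321 : Equiv.Perm (Fin 3) := ⟨![2, 1, 0], ![2, 1, 0], by decide, by decide⟩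

/-- The pattern 3412. -/
def perm3412 : Equiv.Perm (Fin 4) := ⟨![2, 3, 0, 1], ![2, 3, 0, 1], by decide, by decide⟩

/- ### Auxiliary lemmas -/

lemma occ_eq_zero_iff {m n : ℕ} (σ : Equiv.Perm (Fin m)) (π : Equiv.Perm (Fin n)) :
    occ σ π = 0 ↔ ¬ ∃ f : Fin m → Fin n,
      StrictMono f ∧ ∀ j k : Fin m, π (f j) < π (f k) ↔ σ j < σ k := by
  rw [occ, Set.ncard_eq_zero (Set.toFinite _), Set.eq_empty_iff_forall_notMem]
  constructor
  · rintro h ⟨f, hf⟩; exact h f hf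
  · intro h f hf; exact h ⟨f, hf⟩

lemma occ321_eq_zero_iff {n : ℕ} (π : Equiv.Perm (Fin n)) :
    occ perm321 π = 0 ↔
      ¬ ∃ i j k : Fin n, i < j ∧ j < k ∧ π j < π i ∧ π k < π j := by
  rw [occ_eq_zero_iff]
  constructor
  · rintro h ⟨i, j, k, hij, hjk, v1, v2⟩
    apply h
    refine ⟨![i, j, k], ?_, ?_⟩
    · have hik := hij.trans hjk
      intro a b hab
      fin_cases a <;> fin_cases b <;> simp_all
    · have v3 := v2.trans v1
      have n1 := lt_asymm v1
      have n2 := lt_asymm v2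
      have n3 := lt_asymm v3
      intro a b
      fin_cases a <;> fin_cases b <;>
        simp_all [perm321, Matrix.cons_val_zero, Matrix.cons_val_one]
  · rintro h ⟨f, hf, hiff⟩
    exact h ⟨f 0, f 1, f 2, hf (by decide), hf (by decide),
      (hiff 1 0).2 (by decide), (hiff 2 1).2 (by decide)⟩

lemma occ3412_eq_zero_iff {n : ℕ} (π : Equiv.Perm (Fin n)) :
    occ perm3412 π = 0 ↔
      ¬ ∃ i j k l : Fin n, i < j ∧ j < k ∧ k < l ∧
        π k < π l ∧ π l < π i ∧ π i < π j := by
  rw [occ_eq_zero_iff]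
  constructor
  · rintro h ⟨i, j, k, l, hij, hjk, hkl, v1, v2, v3⟩
    apply h
    refine ⟨![i, j, k, l], ?_, ?_⟩
    · have h1 := hij.trans hjk
      have h2 := hjk.trans hkl
      have h3 := h1.trans hkl
      intro a b hab
      fin_cases a <;> fin_cases b <;> simp_all
    · have w1 := v1.trans v2          -- π k < π i
      have w2 := w1.trans v3          -- π k < π j
      have w3 := v2.trans v3          -- π l < π j
      have n1 := lt_asymm v1
      have n2 := lt_asymm v2
      have n3 := lt_asymm v3
      have n4 := lt_asymm w1
      have n5 := lt_asymm w2
      have n6 := lt_asymm w3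
      intro a b
      fin_cases a <;> fin_cases b <;>
        simp_all [perm3412, Matrix.cons_val_zero, Matrix.cons_val_one]
  · rintro h ⟨f, hf, hiff⟩
    exact h ⟨f 0, f 1, f 2, f 3, hf (by decide), hf (by decide), hf (by decide),
      (hiff 2 3).2 (by decide), (hiff 3 0).2 (by decide), (hiff 0 1).2 (by decide)⟩

lemma support_getElem_eq_getVert {V : Type*} {G : SimpleGraph V} {u v : V}
    (p : G.Walk u v) (i : ℕ) (h : i < p.support.length) :
    p.support[i] = p.getVert i := by
  induction p generalizing i with
  | nil =>
    simp only [SimpleGraph.Walk.support_nil, List.length_singleton] at h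
    interval_cases i
    simp [SimpleGraph.Walk.getVert]
  | cons hadj q ih =>
    cases i with
    | zero => simp [SimpleGraph.Walk.support_cons, SimpleGraph.Walk.getVert]
    | succ i =>
      simp only [SimpleGraph.Walk.support_cons, List.getElem_cons_succ,
        SimpleGraph.Walk.getVert_cons_succ]
      exact ih i (by simpa [SimpleGraph.Walk.support_cons] using h)

lemma getVert_ne_of_cycle {V : Type*} {G : SimpleGraph V} {u : V}
    (p : G.Walk u u) (hp : p.IsCycle) {i j : ℕ}
    (h1 : 1 ≤ i) (hij : i < j) (hj : j ≤ p.length) :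
    p.getVert i ≠ p.getVert j := by
  intro he
  have hnd : p.support.tail.Nodup := ((SimpleGraph.Walk.isCycle_def p).1 hp).2.2
  have hlen : p.support.length = p.length + 1 := p.length_support
  obtain ⟨t, hts⟩ : ∃ t, p.support = u :: t := ⟨p.support.tail, p.support_eq_cons⟩
  have hndt : t.Nodup := by rw [hts] at hnd; simpa using hnd
  have htlen : t.length = p.length := by rw [hts] at hlen; simpa using hlen
  have key : ∀ k, 1 ≤ k → k ≤ p.length → t[k-1]? = some (p.getVert k) := by
    intro k h1k h2k
    obtain ⟨k', rfl⟩ : ∃ k', k = k' + 1 := ⟨k - 1, by omega⟩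
    have hh : k' + 1 < p.support.length := by omega
    have e : p.support[k'+1]? = some (p.getVert (k'+1)) := by
      rw [List.getElem?_eq_getElem hh, support_getElem_eq_getVert p _ hh]
    rw [hts] at e
    simpa using e
  have e1 := key i h1 (by omega)
  have e2 := key j (by omega) hj
  rw [he] at e1
  have heq : i - 1 = j - 1 :=
    (List.getElem?_inj (by omega) hndt).1 (e1.trans e2.symm)
  omega

/-- The combinatorial core: if `b` has two neighbours `x < y` (in position) in the
permutation graph, with `π b` smaller than the values of `x`, `y`, and of a further
neighbour `c ≠ b` of `x`, then `π` contains `321` or `3412`. -/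
lemma core_lemma {n : ℕ} (π : Equiv.Perm (Fin n)) (b x y c : Fin n)
    (hbx : (permGraph π).Adj b x) (hby : (permGraph π).Adj b y)
    (hxc : (permGraph π).Adj x c) (hxy : x < y) (hcb : c ≠ b)
    (vbx : π b < π x) (vby : π b < π y) (vbc : π b < π c) :
    (∃ i j k : Fin n, i < j ∧ j < k ∧ π j < π i ∧ π k < π j) ∨
    (∃ i j k l : Fin n, i < j ∧ j < k ∧ k < l ∧
      π k < π l ∧ π l < π i ∧ π i < π j) := by
  -- From the adjacencies, since `π b` is smaller, `x < b` and `y < b` in position.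
  have hxb : x < b := by
    rcases hbx with ⟨h1, h2⟩ | ⟨h1, h2⟩
    · exact absurd h2 (lt_asymm vbx)
    · exact h1
  have hyb : y < b := by
    rcases hby with ⟨h1, h2⟩ | ⟨h1, h2⟩
    · exact absurd h2 (lt_asymm vby)
    · exact h1
  rcases lt_or_gt_of_ne (fun h : π x = π y => (π.injective h ▸ hxy).false) with hv | hv
  · -- π x < π y
    -- consider c, the other neighbour of x
    rcases lt_trichotomy c x with hcx | hcx | hcx
    · -- c < x in position, so π c > π x : pattern 321 on (c, x, b)
      have : π x < π c := by
        rcases hxc with ⟨h1, h2⟩ | ⟨h1, h2⟩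
        · exact absurd h1 (lt_asymm hcx)
        · exact h2
      exact Or.inl ⟨c, x, b, hcx, hxb, this, vbx⟩
    · exact absurd hcx.symm hxc.ne
    · -- x < c, so π c < π x
      have hcv : π c < π x := by
        rcases hxc with ⟨h1, h2⟩ | ⟨h1, h2⟩
        · exact h2
        · exact absurd h1 (lt_asymm hcx)
      rcases lt_trichotomy c b with hcb' | hcb' | hcb'
      · -- x < c < b : pattern 321 on (x, c, b)
        exact Or.inl ⟨x, c, b, hcx, hcb', hcv, vbc⟩
      · exact absurd hcb' hcb
      · -- b < c : pattern 3412 on (x, y, b, c)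
        exact Or.inr ⟨x, y, b, c, hxy, hyb, hcb', vbc, hcv, hv⟩
  · -- π y < π x : pattern 321 on (x, y, b)
    exact Or.inl ⟨x, y, b, hxy, hyb, hv, vby⟩

lemma cycle_gives_pattern {n : ℕ} (π : Equiv.Perm (Fin n)) {v : Fin n}
    (c : (permGraph π).Walk v v) (hc : c.IsCycle) :
    (∃ i j k : Fin n, i < j ∧ j < k ∧ π j < π i ∧ π k < π j) ∨
    (∃ i j k l : Fin n, i < j ∧ j < k ∧ k < l ∧
      π k < π l ∧ π l < π i ∧ π i < π j) := by
  classical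
  -- pick the vertex with minimal value of π on the cycle
  obtain ⟨b, hbmem, hbmin⟩ := Finset.exists_min_image c.support.toFinset
    (fun w => π w) ⟨v, by simp [SimpleGraph.Walk.start_mem_support]⟩
  rw [List.mem_toFinset] at hbmem
  set p : (permGraph π).Walk b b := c.rotate b hbmem with hpdef
  have hp : p.IsCycle := hc.rotate hbmem
  have hmin : ∀ w ∈ p.support, π b ≤ π w := by
    intro w hw
    have hperm := SimpleGraph.Walk.support_rotate c b hbmem
    rw [p.support_eq_cons] at hw
    rcases List.mem_cons.1 hw with rfl | hw'
    · exact le_rfl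
    · have hw2 : w ∈ c.support.tail := hperm.mem_iff.1 hw'
      exact hbmin w (List.mem_toFinset.2 (List.mem_of_mem_tail hw2))
  have h3 : 3 ≤ p.length := hp.three_le_length
  have hminS : ∀ i : ℕ, i ≤ p.length → p.getVert i ≠ b → π b < π (p.getVert i) := by
    intro i hi hne
    have hmem : p.getVert i ∈ p.support :=
      SimpleGraph.Walk.mem_support_iff_exists_getVert.2 ⟨i, rfl, hi⟩
    rcases lt_or_eq_of_le (hmin _ hmem) with h | h
    · exact h
    · exact absurd (π.injective h).symm hne
  -- the two neighbours of b on the cycle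
  set x0 := p.getVert 1 with hx0
  set y0 := p.getVert (p.length - 1) with hy0
  have hx0b : x0 ≠ b := by
    have := getVert_ne_of_cycle p hp (i := 1) (j := p.length) le_rfl (by omega) le_rfl
    simpa [SimpleGraph.Walk.getVert_length] using this
  have hy0b : y0 ≠ b := by
    have := getVert_ne_of_cycle p hp (i := p.length - 1) (j := p.length)
      (by omega) (by omega) le_rfl
    simpa [SimpleGraph.Walk.getVert_length] using this
  have hxy0 : x0 ≠ y0 := getVert_ne_of_cycle p hp (i := 1) (j := p.length - 1)
    le_rfl (by omega) (by omega)
  have hbx0 : (permGraph π).Adj b x0 := by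
    have := p.adj_getVert_succ (i := 0) (by omega)
    simpa [SimpleGraph.Walk.getVert_zero] using this
  have hby0 : (permGraph π).Adj b y0 := by
    have := p.adj_getVert_succ (i := p.length - 1) (by omega)
    rw [show p.length - 1 + 1 = p.length by omega] at this
    simpa [SimpleGraph.Walk.getVert_length] using this.symm
  have vbx0 : π b < π x0 := hminS 1 (by omega) hx0b
  have vby0 : π b < π y0 := hminS (p.length - 1) (by omega) hy0b
  rcases lt_or_gt_of_ne hxy0 with hlt | hlt
  · -- x0 < y0 : take c = getVert 2, the other neighbour of x0
    set c2 := p.getVert 2 with hc2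
    have hxc : (permGraph π).Adj x0 c2 := p.adj_getVert_succ (i := 1) (by omega)
    have hc2b : c2 ≠ b := by
      have := getVert_ne_of_cycle p hp (i := 2) (j := p.length) (by omega) (by omega) le_rfl
      simpa [SimpleGraph.Walk.getVert_length] using this
    exact core_lemma π b x0 y0 c2 hbx0 hby0 hxc hlt hc2b vbx0 vby0
      (hminS 2 (by omega) hc2b)
  · -- y0 < x0 : take c = getVert (length - 2), the other neighbour of y0
    set c2 := p.getVert (p.length - 2) with hc2
    have hxc : (permGraph π).Adj y0 c2 := by
      have := p.adj_getVert_succ (i := p.length - 2) (by omega)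
      rw [show p.length - 2 + 1 = p.length - 1 by omega] at this
      exact this.symm
    have hc2b : c2 ≠ b := by
      have := getVert_ne_of_cycle p hp (i := p.length - 2) (j := p.length)
        (by omega) (by omega) le_rfl
      simpa [SimpleGraph.Walk.getVert_length] using this
    exact core_lemma π b y0 x0 c2 hby0 hbx0 hxc hlt hc2b vby0 vbx0
      (hminS (p.length - 2) (by omega) hc2b)

lemma not_forest_of_321 {n : ℕ} (π : Equiv.Perm (Fin n)) (i j k : Fin n)
    (hij : i < j) (hjk : j < k) (v1 : π j < π i) (v2 : π k < π j) :
    ¬ IsForestPerm π := by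
  intro h
  have hadj1 : (permGraph π).Adj i j := Or.inl ⟨hij, v1⟩
  have hadj2 : (permGraph π).Adj j k := Or.inl ⟨hjk, v2⟩
  have hadj3 : (permGraph π).Adj k i := Or.inr ⟨hij.trans hjk, v2.trans v1⟩
  have hik := hij.trans hjk
  refine h (SimpleGraph.Walk.cons hadj1 (SimpleGraph.Walk.cons hadj2
    (SimpleGraph.Walk.cons hadj3 SimpleGraph.Walk.nil))) ?_
  rw [SimpleGraph.Walk.isCycle_def]
  refine ⟨?_, by simp, ?_⟩
  · rw [SimpleGraph.Walk.isTrail_def]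
    simp [SimpleGraph.Walk.edges, hij.ne, hjk.ne, hik.ne, hij.ne', hjk.ne', hik.ne',
      Sym2.eq, Sym2.rel_iff]
  · simp [hij.ne, hjk.ne, hik.ne, hij.ne', hjk.ne', hik.ne']

lemma not_forest_of_3412 {n : ℕ} (π : Equiv.Perm (Fin n)) (i j k l : Fin n)
    (hij : i < j) (hjk : j < k) (hkl : k < l)
    (v1 : π k < π l) (v2 : π l < π i) (v3 : π i < π j) :
    ¬ IsForestPerm π := by
  intro h
  have hik := hij.trans hjk
  have hjl := hjk.trans hkl
  have hil := hik.trans hkl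
  have w1 := v1.trans v2  -- π k < π i
  have w2 := w1.trans v3  -- π k < π j
  have w3 := v2.trans v3  -- π l < π j
  -- cycle: i — k — j — l — i
  have hadj1 : (permGraph π).Adj i k := Or.inl ⟨hik, w1⟩
  have hadj2 : (permGraph π).Adj k j := Or.inr ⟨hjk, w2⟩
  have hadj3 : (permGraph π).Adj j l := Or.inl ⟨hjl, w3⟩
  have hadj4 : (permGraph π).Adj l i := Or.inr ⟨hil, v2⟩
  refine h (SimpleGraph.Walk.cons hadj1 (SimpleGraph.Walk.cons hadj2
    (SimpleGraph.Walk.cons hadj3 (SimpleGraph.Walk.cons hadj4 SimpleGraph.Walk.nil)))) ?_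
  rw [SimpleGraph.Walk.isCycle_def]
  refine ⟨?_, by simp, ?_⟩
  · rw [SimpleGraph.Walk.isTrail_def]
    simp [SimpleGraph.Walk.edges, hij.ne, hjk.ne, hkl.ne, hik.ne, hjl.ne, hil.ne,
      hij.ne', hjk.ne', hkl.ne', hik.ne', hjl.ne', hil.ne', Sym2.eq, Sym2.rel_iff]
  · simp [hij.ne, hjk.ne, hkl.ne, hik.ne, hjl.ne, hil.ne,
      hij.ne', hjk.ne', hkl.ne', hik.ne', hjl.ne', hil.ne']

/-- A permutation of `[n]` is a forest permutation if and only if it avoids the patterns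
321 and 3412. -/
theorem forestPerm_iff_avoids_321_and_3412 (n : ℕ) (π : Equiv.Perm (Fin n)) :
    IsForestPerm π ↔ occ perm321 π = 0 ∧ occ perm3412 π = 0 := by
  constructor
  · intro h
    constructor
    · rw [occ321_eq_zero_iff]
      rintro ⟨i, j, k, hij, hjk, v1, v2⟩
      exact not_forest_of_321 π i j k hij hjk v1 v2 h
    · rw [occ3412_eq_zero_iff]
      rintro ⟨i, j, k, l, hij, hjk, hkl, v1, v2, v3⟩
      exact not_forest_of_3412 π i j k l hij hjk hkl v1 v2 v3 h
  · rintro ⟨h1, h2⟩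
    rw [occ321_eq_zero_iff] at h1
    rw [occ3412_eq_zero_iff] at h2
    intro v c hc
    rcases cycle_gives_pattern π c hc with ⟨i, j, k, h⟩ | ⟨i, j, k, l, h⟩
    · exact h1 ⟨i, j, k, h⟩
    · exact h2 ⟨i, j, k, l, h⟩
end

section
/- Let π be a forest permutation of length n. Then every index i∈[n] is a left-to-right maximum of π or a right-to-left minimum of π (possibly both); moreover, i is both a left-to-right maximum and a right-to-left minimum if and only if i is an isolated vertex of the permutation graph G_π, i.e., i is involved in no inversion of π. -/
/-- `i` is a left-to-right maximum of `π`: `π j < π i` for all `j < i`. -/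
def IsLtrMax {n : ℕ} (π : Equiv.Perm (Fin n)) (i : Fin n) : Prop :=
  ∀ j : Fin n, j < i → π j < π i

/-- `i` is a right-to-left minimum of `π`: `π i < π j` for all `j > i`. -/
def IsRtlMin {n : ℕ} (π : Equiv.Perm (Fin n)) (i : Fin n) : Prop :=
  ∀ j : Fin n, i < j → π i < π j

lemma acyclic_no_triangle {V : Type*} {G : SimpleGraph V} (h : G.IsAcyclic)
    {a b c : V} (hab : G.Adj a b) (hbc : G.Adj b c) (hca : G.Adj c a) : False := by
  have hac : a ≠ c := fun e => (e ▸ hca).ne rfl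
  refine h (.cons hab (.cons hbc (.cons hca .nil))) ?_
  rw [SimpleGraph.Walk.isCycle_def, SimpleGraph.Walk.isTrail_def]
  refine ⟨?_, by simp, ?_⟩ <;>
    simp [Sym2.eq_iff, hab.ne, hbc.ne, hca.ne, hac, hac.symm, hab.ne', hbc.ne', hca.ne']

/-- In a forest permutation, every index is a left-to-right maximum or a right-to-left minimum
(possibly both); it is both if and only if it is an isolated vertex of the permutation graph,
i.e. it is involved in no inversion. -/
theorem forestPerm_ltrMax_or_rtlMin (n : ℕ) (π : Equiv.Perm (Fin n))
    (hπ : IsForestPerm π) (i : Fin n) :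
    (IsLtrMax π i ∨ IsRtlMin π i) ∧
    ((IsLtrMax π i ∧ IsRtlMin π i) ↔ ∀ j : Fin n, ¬ (permGraph π).Adj i j) := by
  constructor
  · by_contra hc
    push_neg at hc
    obtain ⟨hL, hR⟩ := hc
    simp only [IsLtrMax, IsRtlMin, not_forall] at hL hR
    obtain ⟨a, ha, ha'⟩ := hL
    obtain ⟨b, hb, hb'⟩ := hR
    have hπa : π i < π a := lt_of_le_of_ne (not_lt.mp ha') (fun e => ha.ne (π.injective e.symm))
    have hπb : π b < π i := lt_of_le_of_ne (not_lt.mp hb') (fun e => hb.ne' (π.injective e))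
    exact acyclic_no_triangle hπ (G := permGraph π) (a := a) (b := i) (c := b)
      (Or.inl ⟨ha, hπa⟩) (Or.inl ⟨hb, hπb⟩) (Or.inr ⟨ha.trans hb, hπb.trans hπa⟩)
  · constructor
    · rintro ⟨hL, hR⟩ j (⟨h1, h2⟩ | ⟨h1, h2⟩)
      · exact absurd (hR j h1) (not_lt.mpr h2.le)
      · exact absurd (hL j h1) (not_lt.mpr h2.le)
    · intro h
      constructor
      · intro j hj
        rcases lt_trichotomy (π j) (π i) with h' | h' | h'
        · exact h'
        · exact absurd (π.injective h') hj.ne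
        · exact absurd (Or.inr ⟨hj, h'⟩) (h j)
      · intro j hj
        rcases lt_trichotomy (π i) (π j) with h' | h' | h'
        · exact h'
        · exact absurd (π.injective h') hj.ne
        · exact absurd (Or.inl ⟨hj, h'⟩) (h j)
end

section
/- Fix n≥2. For a tree permutation τ of length n, every index is a left-to-right maximum of τ or a right-to-left minimum of τ but not both; and the map sending τ to the function ω_τ:[n]→{L,R}, where ω_τ(i)=L if i is a left-to-right maximum of τ and ω_τ(i)=R otherwise, is a bijection from the set 𝔗_n of tree permutations of length n onto the set of all functions ω:[n]→{L,R} with ω(1)=L and ω(n)=R. -/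
set_option linter.unusedSectionVars false
set_option maxHeartbeats 1000000



/-- A tree permutation: its permutation graph is a tree. -/
def IsTreePerm {n : ℕ} (π : Equiv.Perm (Fin n)) : Prop := (permGraph π).IsTree

namespace TreePermAux

open SimpleGraph Finset


variable {V : Type*}

lemma walk_support_get {G : SimpleGraph V} {a b : V} (w : G.Walk a b) :
    ∀ (i : ℕ) (h : i < w.support.length), w.support.get ⟨i, h⟩ = w.getVert i := by
  induction w with
  | nil =>
    intro i h
    simp only [Walk.support_nil, List.length_singleton] at h
    interval_cases i
    simp [Walk.getVert]
  | cons hadj q ih =>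
    intro i h
    cases i with
    | zero => simp [Walk.support_cons, Walk.getVert]
    | succ i =>
      simp only [Walk.support_cons, List.length_cons] at h
      simp only [Walk.support_cons, List.get_cons_succ, Walk.getVert_cons_succ]
      exact ih i (by omega)

lemma acyclic_of_parent [Fintype V] [DecidableEq V] (G : SimpleGraph V) (parent : V → V) (μ : V → ℕ)
    (H : ∀ a b, G.Adj a b → (parent a = b ∧ μ b < μ a) ∨ (parent b = a ∧ μ a < μ b)) :
    G.IsAcyclic := by
  intro v c hc
  obtain ⟨m, hm, hmax⟩ := Finset.exists_max_image c.support.toFinset μ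
    ⟨v, List.mem_toFinset.2 c.start_mem_support⟩
  rw [List.mem_toFinset] at hm
  set c' := c.rotate m hm with hc'def
  have hc' : c'.IsCycle := hc.rotate hm
  have hmemc : ∀ a ∈ c'.support, a ∈ c.support := by
    intro a ha
    rw [Walk.support_eq_cons] at ha
    rcases List.mem_cons.1 ha with rfl | ha
    · exact hm
    · have := (Walk.support_rotate c m hm).mem_iff.1 ha
      exact List.mem_of_mem_tail this
  have hmax' : ∀ a ∈ c'.support, μ a ≤ μ m := fun a ha =>
    hmax a (List.mem_toFinset.2 (hmemc a ha))
  set k := c'.length with hkdef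
  have hk3 : 3 ≤ k := hc'.three_le_length
  have hlen : c'.support.length = k + 1 := c'.length_support
  set b := c'.getVert 1 with hbdef
  set p := c'.getVert (k - 1) with hpdef
  have hadj1 : G.Adj m b := by
    have := c'.adj_getVert_succ (show 0 < k by omega)
    simpa [Walk.getVert_zero] using this
  have hadj2 : G.Adj p m := by
    have := c'.adj_getVert_succ (show k - 1 < k by omega)
    have h2 : k - 1 + 1 = k := by omega
    rw [h2] at this
    have h3 : c'.getVert k = m := c'.getVert_length
    rwa [h3] at this
  have hb_mem : b ∈ c'.support := by
    rw [hbdef, ← walk_support_get c' 1 (by omega)]; exact List.get_mem _ _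
  have hp_mem : p ∈ c'.support := by
    rw [hpdef, ← walk_support_get c' (k-1) (by omega)]; exact List.get_mem _ _
  have hbp : b ≠ p := by
    intro hEq
    have hnd : c'.support.tail.Nodup := hc'.support_nodup
    have htl : c'.support.tail.length = k := by
      rw [List.length_tail, hlen]; omega
    have h1 : c'.support.tail.get ⟨0, by omega⟩ = b := by
      rw [List.get_tail]
      exact walk_support_get c' 1 (by omega)
    have h2 : c'.support.tail.get ⟨k - 2, by omega⟩ = p := by
      rw [List.get_tail]
      have : k - 2 + 1 = k - 1 := by omega
      simp only [this]
      exact walk_support_get c' (k-1) (by omega)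
    have : (⟨0, by omega⟩ : Fin c'.support.tail.length) = ⟨k - 2, by omega⟩ := by
      rw [← hnd.get_inj_iff]
      rw [h1, h2, hEq]
    have := Fin.mk.injEq .. ▸ this
    omega
  rcases H m b hadj1 with ⟨hpar1, hlt1⟩ | ⟨hpar1, hlt1⟩
  · rcases H p m hadj2 with ⟨hpar2, hlt2⟩ | ⟨hpar2, hlt2⟩
    · exact absurd (hmax' p hp_mem) (not_le.2 hlt2)
    · exact hbp (hpar1.symm.trans hpar2)
  · exact absurd (hmax' b hb_mem) (not_le.2 hlt1)



variable {V : Type*} {G : SimpleGraph V}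

lemma no_triangle (hG : G.IsAcyclic) {a b c : V} (hab : G.Adj a b) (hbc : G.Adj b c)
    (hca : G.Adj c a) : False := by
  have nab := G.ne_of_adj hab
  have nbc := G.ne_of_adj hbc
  have nca := G.ne_of_adj hca
  have hC : (Walk.cons hab (Walk.cons hbc (Walk.cons hca Walk.nil))).IsCycle := by
    rw [Walk.isCycle_def, Walk.isTrail_def]
    simp [Sym2.eq_iff]
    tauto
  exact hG _ hC

lemma no_square (hG : G.IsAcyclic) {a b c d : V} (hab : G.Adj a b) (hbc : G.Adj b c)
    (hcd : G.Adj c d) (hda : G.Adj d a) (hac : a ≠ c) (hbd : b ≠ d) : False := by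
  have nab := G.ne_of_adj hab
  have nbc := G.ne_of_adj hbc
  have ncd := G.ne_of_adj hcd
  have nda := G.ne_of_adj hda
  have hC : (Walk.cons hab (Walk.cons hbc (Walk.cons hcd (Walk.cons hda Walk.nil)))).IsCycle := by
    rw [Walk.isCycle_def, Walk.isTrail_def]
    simp [Sym2.eq_iff]
    tauto
  exact hG _ hC



open SimpleGraph Finset

variable {n : ℕ}

lemma permGraph_adj {τ : Equiv.Perm (Fin n)} {i j : Fin n} :
    (permGraph τ).Adj i j ↔ (i < j ∧ τ j < τ i) ∨ (j < i ∧ τ i < τ j) := Iff.rfl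

/-- If positions `< c` map into values `< c`, the permutation graph is disconnected. -/
lemma no_decomp (τ : Equiv.Perm (Fin n)) (hconn : (permGraph τ).Connected) {c : ℕ}
    (hc0 : 0 < c) (hcn : c < n) (h : ∀ k : Fin n, k.val < c → (τ k).val < c) : False := by
  have hn : 0 < n := by omega
  -- upgrade to iff
  have h' : ∀ k : Fin n, (τ k).val < c → k.val < c := by
    intro k hk
    classical
    set A : Finset (Fin n) := Finset.univ.filter (fun x => x.val < c) with hA
    have himg : A.image τ ⊆ A := by
      intro x hx
      rw [Finset.mem_image] at hx
      obtain ⟨y, hy, rfl⟩ := hx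
      rw [hA, Finset.mem_filter] at hy ⊢
      exact ⟨Finset.mem_univ _, h y hy.2⟩
    have hcard : A.card ≤ (A.image τ).card := by
      rw [Finset.card_image_of_injective _ τ.injective]
    have heq : A.image τ = A := Finset.eq_of_subset_of_card_le himg hcard
    have : τ k ∈ A := by rw [hA, Finset.mem_filter]; exact ⟨Finset.mem_univ _, hk⟩
    rw [← heq, Finset.mem_image] at this
    obtain ⟨y, hy, hyk⟩ := this
    have : y = k := τ.injective hyk
    subst this
    rw [hA, Finset.mem_filter] at hy
    exact hy.2
  -- walks preserve the set
  have hwalk : ∀ (a b : Fin n) (w : (permGraph τ).Walk a b), a.val < c → b.val < c := by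
    intro a b w
    induction w with
    | nil => exact id
    | cons hadj w ih =>
      intro ha
      apply ih
      rcases hadj with ⟨hlt, hv⟩ | ⟨hlt, hv⟩
      · exact h' _ (lt_trans hv (h _ ha))
      · exact lt_trans hlt ha
  obtain ⟨w⟩ := hconn.preconnected ⟨0, hn⟩ ⟨c, hcn⟩
  exact absurd (hwalk _ _ w (by simpa using hc0)) (by simp)

lemma not_ltrMax_and_rtlMin (hn : 2 ≤ n) (τ : Equiv.Perm (Fin n))
    (hconn : (permGraph τ).Connected) {i : Fin n} (hL : IsLtrMax τ i) (hR : IsRtlMin τ i) :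
    False := by
  have hiso : ∀ j, ¬ (permGraph τ).Adj i j := by
    intro j hadj
    rcases hadj with ⟨hlt, hv⟩ | ⟨hlt, hv⟩
    · exact absurd (hR j hlt) (not_lt.2 hv.le)
    · exact absurd (hL j hlt) (not_lt.2 hv.le)
  -- pick j ≠ i
  obtain ⟨j, hj⟩ : ∃ j : Fin n, j ≠ i := by
    exact Fintype.exists_ne_of_one_lt_card (by simp; omega) i
  obtain ⟨w⟩ := hconn.preconnected i j
  cases w with
  | nil => exact hj rfl
  | cons hadj _ => exact hiso _ hadj

lemma ltrMax_iff_not_rtlMin (hn : 2 ≤ n) (τ : Equiv.Perm (Fin n))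
    (htree : (permGraph τ).IsTree) (i : Fin n) : IsLtrMax τ i ↔ ¬ IsRtlMin τ i := by
  constructor
  · intro hL hR
    exact not_ltrMax_and_rtlMin hn τ htree.isConnected hL hR
  · intro hR
    intro j hj
    by_contra hv
    -- τ j ≥ τ i with j < i, so τ j > τ i
    have hji : τ i < τ j := lt_of_le_of_ne (not_lt.1 hv) (fun h => (ne_of_lt hj) (τ.injective h.symm))
    -- ¬RtlMin: some k > i with τ k ≤ τ i
    rw [IsRtlMin] at hR
    push_neg at hR
    obtain ⟨k, hik, hki⟩ := hR
    have hki' : τ k < τ i := lt_of_le_of_ne hki (fun h => (ne_of_lt hik) (τ.injective h).symm)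
    -- triangle j - i - k - j
    have h1 : (permGraph τ).Adj j i := Or.inl ⟨hj, hji⟩
    have h2 : (permGraph τ).Adj i k := Or.inl ⟨hik, hki'⟩
    have h3 : (permGraph τ).Adj k j := Or.inr ⟨lt_trans hj hik, lt_trans hki' hji⟩
    exact no_triangle htree.IsAcyclic h1 h2 h3



open Finset

variable {n : ℕ}

lemma pos_of_two_le_aux {n : ℕ} (hn : 2 ≤ n) : 0 < n := by omega

lemma sub_one_lt_of_two_le_aux {n : ℕ} (hn : 2 ≤ n) : n - 1 < n := by omega

section Defs

/-- next position `> i` carrying `true` (`L`), or `n-1` as fallback. -/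
def NL (hn : 2 ≤ n) (ω : Fin n → Bool) (i : Fin n) : Fin n :=
  if h : ((univ : Finset (Fin n)).filter fun k => ω k = true ∧ i < k).Nonempty
  then (univ.filter fun k => ω k = true ∧ i < k).min' h else ⟨n-1, sub_one_lt_of_two_le_aux hn⟩

/-- previous position `< j` carrying `false` (`R`), or `0` as fallback. -/
def PR (hn : 2 ≤ n) (ω : Fin n → Bool) (j : Fin n) : Fin n :=
  if h : ((univ : Finset (Fin n)).filter fun k => ω k = false ∧ k < j).Nonempty
  then (univ.filter fun k => ω k = false ∧ k < j).max' h else ⟨0, pos_of_two_le_aux hn⟩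

/-- previous position `< i` carrying `true`. -/
def PL (hn : 2 ≤ n) (ω : Fin n → Bool) (i : Fin n) : Fin n :=
  if h : ((univ : Finset (Fin n)).filter fun k => ω k = true ∧ k < i).Nonempty
  then (univ.filter fun k => ω k = true ∧ k < i).max' h else ⟨0, pos_of_two_le_aux hn⟩

/-- next position `> v` carrying `false`. -/
def NR (hn : 2 ≤ n) (ω : Fin n → Bool) (v : Fin n) : Fin n :=
  if h : ((univ : Finset (Fin n)).filter fun k => ω k = false ∧ v < k).Nonempty
  then (univ.filter fun k => ω k = false ∧ v < k).min' h else ⟨n-1, sub_one_lt_of_two_le_aux hn⟩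

def fWord (hn : 2 ≤ n) (ω : Fin n → Bool) (i : Fin n) : Fin n :=
  if ω i = true then NL hn ω i else PR hn ω i

end Defs

section Lemmas

variable (hn : 2 ≤ n) (ω : Fin n → Bool)
  (hω0 : ω ⟨0, pos_of_two_le_aux hn⟩ = true) (hωl : ω ⟨n-1, sub_one_lt_of_two_le_aux hn⟩ = false)

include hn ω hω0 hωl

lemma ne_last_of_L {i : Fin n} (hi : ω i = true) : i.val < n - 1 := by
  have hlt : i.val ≤ n - 1 := by omega
  rcases lt_or_eq_of_le hlt with h | h
  · exact h
  · exfalso; rw [show i = ⟨n-1, sub_one_lt_of_two_le_aux hn⟩ from Fin.ext h] at hi; rw [hωl] at hi; simp at hi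

lemma ne_zero_of_R {j : Fin n} (hj : ω j = false) : 0 < j.val := by
  rcases Nat.eq_zero_or_pos j.val with h | h
  · exfalso; rw [show j = ⟨0, pos_of_two_le_aux hn⟩ from Fin.ext h] at hj; rw [hω0] at hj; simp at hj
  · exact h

-- NL lemmas
lemma nl_gt {i : Fin n} (hi : ω i = true) : i < NL hn ω i := by
  rw [NL]
  split
  · next h =>
    have := Finset.min'_mem _ h
    rw [Finset.mem_filter] at this
    exact this.2.2
  · exact Fin.lt_def.2 (by simpa using ne_last_of_L hn ω hω0 hωl hi)

lemma nl_between {i k : Fin n} (h1 : i < k) (h2 : k < NL hn ω i) : ω k = false := by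
  rw [NL] at h2
  by_contra hk
  simp only [Bool.not_eq_false] at hk
  revert h2
  split
  · next h =>
    intro h2
    have : k ∈ univ.filter fun k => ω k = true ∧ i < k := by
      rw [Finset.mem_filter]; exact ⟨Finset.mem_univ _, hk, h1⟩
    exact absurd (Finset.min'_le _ _ this) (not_le.2 h2)
  · next h =>
    intro h2
    exact h ⟨k, by rw [Finset.mem_filter]; exact ⟨Finset.mem_univ _, hk, h1⟩⟩

lemma nl_L_or_last {i : Fin n} : ω (NL hn ω i) = true ∨ NL hn ω i = ⟨n-1, sub_one_lt_of_two_le_aux hn⟩ := by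
  rw [NL]
  split
  · next h =>
    left
    have := Finset.min'_mem _ h
    rw [Finset.mem_filter] at this
    exact this.2.1
  · right; rfl

lemma nl_min {i k : Fin n} (h1 : i < k) (h2 : ω k = true) : NL hn ω i ≤ k := by
  rw [NL]
  split
  · next h => exact Finset.min'_le _ _ (by rw [Finset.mem_filter]; exact ⟨Finset.mem_univ _, h2, h1⟩)
  · next h => exact absurd ⟨k, by rw [Finset.mem_filter]; exact ⟨Finset.mem_univ _, h2, h1⟩⟩ h

-- PR lemmas
lemma pr_lt {j : Fin n} (hj : ω j = false) : PR hn ω j < j := by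
  rw [PR]
  split
  · next h =>
    have := Finset.max'_mem _ h
    rw [Finset.mem_filter] at this
    exact this.2.2
  · exact Fin.lt_def.2 (by simpa using ne_zero_of_R hn ω hω0 hωl hj)

lemma pr_between {j k : Fin n} (h1 : PR hn ω j < k) (h2 : k < j) : ω k = true := by
  rw [PR] at h1
  by_contra hk
  simp only [Bool.not_eq_true] at hk
  revert h1
  split
  · next h =>
    intro h1
    have : k ∈ univ.filter fun k => ω k = false ∧ k < j := by
      rw [Finset.mem_filter]; exact ⟨Finset.mem_univ _, hk, h2⟩
    exact absurd (Finset.le_max' _ _ this) (not_le.2 h1)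
  · next h =>
    intro h1
    exact h ⟨k, by rw [Finset.mem_filter]; exact ⟨Finset.mem_univ _, hk, h2⟩⟩

lemma pr_R_or_zero {j : Fin n} : ω (PR hn ω j) = false ∨ PR hn ω j = ⟨0, pos_of_two_le_aux hn⟩ := by
  rw [PR]
  split
  · next h =>
    left
    have := Finset.max'_mem _ h
    rw [Finset.mem_filter] at this
    exact this.2.1
  · right; rfl

lemma pr_max {j k : Fin n} (h1 : k < j) (h2 : ω k = false) : k ≤ PR hn ω j := by
  rw [PR]
  split
  · next h => exact Finset.le_max' _ _ (by rw [Finset.mem_filter]; exact ⟨Finset.mem_univ _, h2, h1⟩)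
  · next h => exact absurd ⟨k, by rw [Finset.mem_filter]; exact ⟨Finset.mem_univ _, h2, h1⟩⟩ h

-- PL lemmas (used for positions with 0 < i, where the filter is nonempty)
lemma pl_nonempty {i : Fin n} (hi : 0 < i.val) :
    ((univ : Finset (Fin n)).filter fun k => ω k = true ∧ k < i).Nonempty :=
  ⟨⟨0, pos_of_two_le_aux hn⟩, by rw [Finset.mem_filter]; exact ⟨Finset.mem_univ _, hω0, Fin.lt_def.2 (by simpa using hi)⟩⟩

lemma pl_lt {i : Fin n} (hi : 0 < i.val) : PL hn ω i < i := by
  rw [PL, dif_pos (pl_nonempty hn ω hω0 hωl hi)]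
  have := Finset.max'_mem _ (pl_nonempty hn ω hω0 hωl hi)
  rw [Finset.mem_filter] at this
  exact this.2.2

lemma pl_L {i : Fin n} (hi : 0 < i.val) : ω (PL hn ω i) = true := by
  rw [PL, dif_pos (pl_nonempty hn ω hω0 hωl hi)]
  have := Finset.max'_mem _ (pl_nonempty hn ω hω0 hωl hi)
  rw [Finset.mem_filter] at this
  exact this.2.1

lemma pl_between {i k : Fin n} (hi : 0 < i.val) (h1 : PL hn ω i < k) (h2 : k < i) :
    ω k = false := by
  by_contra hk
  simp only [Bool.not_eq_false] at hk
  have : k ≤ PL hn ω i := by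
    rw [PL, dif_pos (pl_nonempty hn ω hω0 hωl hi)]
    exact Finset.le_max' _ _ (by rw [Finset.mem_filter]; exact ⟨Finset.mem_univ _, hk, h2⟩)
  exact absurd h1 (not_lt.2 this)

lemma pl_max {i k : Fin n} (hi : 0 < i.val) (h1 : k < i) (h2 : ω k = true) :
    k ≤ PL hn ω i := by
  rw [PL, dif_pos (pl_nonempty hn ω hω0 hωl hi)]
  exact Finset.le_max' _ _ (by rw [Finset.mem_filter]; exact ⟨Finset.mem_univ _, h2, h1⟩)

-- NR lemmas (used for positions with i.val < n-1, where the filter is nonempty)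
lemma nr_nonempty {v : Fin n} (hv : v.val < n - 1) :
    ((univ : Finset (Fin n)).filter fun k => ω k = false ∧ v < k).Nonempty :=
  ⟨⟨n-1, sub_one_lt_of_two_le_aux hn⟩, by rw [Finset.mem_filter]; exact ⟨Finset.mem_univ _, hωl, Fin.lt_def.2 (by simpa using hv)⟩⟩

lemma nr_gt {v : Fin n} (hv : v.val < n - 1) : v < NR hn ω v := by
  rw [NR, dif_pos (nr_nonempty hn ω hω0 hωl hv)]
  have := Finset.min'_mem _ (nr_nonempty hn ω hω0 hωl hv)
  rw [Finset.mem_filter] at this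
  exact this.2.2

lemma nr_R {v : Fin n} (hv : v.val < n - 1) : ω (NR hn ω v) = false := by
  rw [NR, dif_pos (nr_nonempty hn ω hω0 hωl hv)]
  have := Finset.min'_mem _ (nr_nonempty hn ω hω0 hωl hv)
  rw [Finset.mem_filter] at this
  exact this.2.1

lemma nr_between {v k : Fin n} (hv : v.val < n - 1) (h1 : v < k) (h2 : k < NR hn ω v) :
    ω k = true := by
  by_contra hk
  simp only [Bool.not_eq_true] at hk
  have : NR hn ω v ≤ k := by
    rw [NR, dif_pos (nr_nonempty hn ω hω0 hωl hv)]
    exact Finset.min'_le _ _ (by rw [Finset.mem_filter]; exact ⟨Finset.mem_univ _, hk, h1⟩)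
  exact absurd h2 (not_lt.2 this)

lemma nr_min {v k : Fin n} (hv : v.val < n - 1) (h1 : v < k) (h2 : ω k = false) :
    NR hn ω v ≤ k := by
  rw [NR, dif_pos (nr_nonempty hn ω hω0 hωl hv)]
  exact Finset.min'_le _ _ (by rw [Finset.mem_filter]; exact ⟨Finset.mem_univ _, h2, h1⟩)

end Lemmas


section Perm

variable (hn : 2 ≤ n) (ω : Fin n → Bool)
  (hω0 : ω ⟨0, pos_of_two_le_aux hn⟩ = true) (hωl : ω ⟨n-1, sub_one_lt_of_two_le_aux hn⟩ = false)

include hn ω hω0 hωl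

lemma mono_LL {a b : Fin n} (hab : a < b) (ha : ω a = true) (hb : ω b = true) :
    fWord hn ω a < fWord hn ω b := by
  rw [fWord, fWord, if_pos ha, if_pos hb]
  exact lt_of_le_of_lt (nl_min hn ω hω0 hωl hab hb) (nl_gt hn ω hω0 hωl hb)

lemma mono_RR {a b : Fin n} (hab : a < b) (ha : ω a = false) (hb : ω b = false) :
    fWord hn ω a < fWord hn ω b := by
  rw [fWord, fWord, if_neg (by simp [ha]), if_neg (by simp [hb])]
  exact lt_of_lt_of_le (pr_lt hn ω hω0 hωl ha) (pr_max hn ω hω0 hωl hab ha)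

lemma mono_RL {a b : Fin n} (hab : a < b) (ha : ω a = false) (hb : ω b = true) :
    fWord hn ω a < fWord hn ω b := by
  rw [fWord, fWord, if_neg (by simp [ha]), if_pos hb]
  exact lt_trans (lt_trans (pr_lt hn ω hω0 hωl ha) hab) (nl_gt hn ω hω0 hωl hb)

lemma ne_LR {a b : Fin n} (ha : ω a = true) (hb : ω b = false) :
    fWord hn ω a ≠ fWord hn ω b := by
  rw [fWord, fWord, if_pos ha, if_neg (by simp [hb])]
  have h1 : a < NL hn ω a := nl_gt hn ω hω0 hωl ha
  have h2 : PR hn ω b < b := pr_lt hn ω hω0 hωl hb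
  rcases nl_L_or_last hn ω hω0 hωl (i := a) with hL | hL
  · rcases pr_R_or_zero hn ω hω0 hωl (j := b) with hR | hR
    · intro h; rw [h, hR] at hL; simp at hL
    · intro h; rw [h, hR] at h1; exact absurd h1 (by rw [Fin.lt_def]; simp)
  · intro h
    rw [hL] at h
    rw [← h, Fin.lt_def] at h2
    simp at h2
    omega

lemma f_injective : Function.Injective (fWord hn ω) := by
  intro a b hab
  by_contra hne
  rcases lt_trichotomy a b with h | h | h
  · cases ha : ω a <;> cases hb : ω b
    · exact absurd hab (ne_of_lt (mono_RR hn ω hω0 hωl h ha hb))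
    · exact absurd hab (ne_of_lt (mono_RL hn ω hω0 hωl h ha hb))
    · exact ne_LR hn ω hω0 hωl ha hb hab
    · exact absurd hab (ne_of_lt (mono_LL hn ω hω0 hωl h ha hb))
  · exact hne h
  · cases ha : ω a <;> cases hb : ω b
    · exact absurd hab.symm (ne_of_lt (mono_RR hn ω hω0 hωl h hb ha))
    · exact (ne_LR hn ω hω0 hωl hb ha) hab.symm
    · exact absurd hab.symm (ne_of_lt (mono_RL hn ω hω0 hωl h hb ha))
    · exact absurd hab.symm (ne_of_lt (mono_LL hn ω hω0 hωl h hb ha))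

noncomputable def fPerm : Equiv.Perm (Fin n) :=
  Equiv.ofBijective _ (Finite.injective_iff_bijective.1 (f_injective hn ω hω0 hωl))

lemma fPerm_apply (i : Fin n) : fPerm hn ω hω0 hωl i = fWord hn ω i := rfl

end Perm

section Code

variable (hn : 2 ≤ n) (ω : Fin n → Bool)
  (hω0 : ω ⟨0, pos_of_two_le_aux hn⟩ = true) (hωl : ω ⟨n-1, sub_one_lt_of_two_le_aux hn⟩ = false)

include hn ω hω0 hωl

/-- `NL` of the previous `L` jumps at least to `i`. -/
lemma nl_pl_ge {i : Fin n} (hi : 0 < i.val) : i ≤ NL hn ω (PL hn ω i) := by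
  by_contra h
  rw [not_le] at h
  have hpl : PL hn ω i < i := pl_lt hn ω hω0 hωl hi
  have hplL : ω (PL hn ω i) = true := pl_L hn ω hω0 hωl hi
  have hgt : PL hn ω i < NL hn ω (PL hn ω i) := nl_gt hn ω hω0 hωl hplL
  rcases nl_L_or_last hn ω hω0 hωl (i := PL hn ω i) with hL | hL
  · have := pl_max hn ω hω0 hωl hi h hL
    exact absurd hgt (not_lt.2 this)
  · rw [hL, Fin.lt_def] at h
    simp at h
    omega

/-- similarly, `PR` of the next `R` reaches back at most to `v`. -/
lemma pr_nr_le {v : Fin n} (hv : v.val < n - 1) : PR hn ω (NR hn ω v) ≤ v := by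
  by_contra h
  rw [not_le] at h
  have hnr : v < NR hn ω v := nr_gt hn ω hω0 hωl hv
  have hnrR : ω (NR hn ω v) = false := nr_R hn ω hω0 hωl hv
  have hlt : PR hn ω (NR hn ω v) < NR hn ω v := pr_lt hn ω hω0 hωl hnrR
  rcases pr_R_or_zero hn ω hω0 hωl (j := NR hn ω v) with hR | hR
  · have := nr_min hn ω hω0 hωl hv h hR
    exact absurd hlt (not_lt.2 this)
  · rw [hR, Fin.lt_def] at h
    simp at h

lemma code_fPerm (i : Fin n) : ω i = true ↔ IsLtrMax (fPerm hn ω hω0 hωl) i := by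
  constructor
  · intro hi j hj
    rw [fPerm_apply, fPerm_apply]
    cases hj' : ω j with
    | true => exact mono_LL hn ω hω0 hωl hj hj' hi
    | false =>
      rw [fWord, fWord, if_pos hi, if_neg (by simp [hj'])]
      exact lt_trans (lt_trans (pr_lt hn ω hω0 hωl hj') hj) (nl_gt hn ω hω0 hωl hi)
  · intro hmax
    by_contra hi
    simp only [Bool.not_eq_true] at hi
    have h0 : 0 < i.val := ne_zero_of_R hn ω hω0 hωl hi
    have h1 := hmax (PL hn ω i) (pl_lt hn ω hω0 hωl h0)
    rw [fPerm_apply, fPerm_apply, fWord, fWord, if_pos (pl_L hn ω hω0 hωl h0),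
      if_neg (by simp [hi])] at h1
    have h2 : PR hn ω i < i := pr_lt hn ω hω0 hωl hi
    have h3 : i ≤ NL hn ω (PL hn ω i) := nl_pl_ge hn ω hω0 hωl h0
    exact absurd h1 (not_lt.2 (le_trans (le_of_lt h2) h3))

end Code

section Conn

variable (hn : 2 ≤ n) (ω : Fin n → Bool)
  (hω0 : ω ⟨0, pos_of_two_le_aux hn⟩ = true) (hωl : ω ⟨n-1, sub_one_lt_of_two_le_aux hn⟩ = false)

include hn ω hω0 hωl

lemma adj_pl_of_R {v : Fin n} (hv : ω v = false) :
    (permGraph (fPerm hn ω hω0 hωl)).Adj (PL hn ω v) v := by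
  have h0 : 0 < v.val := ne_zero_of_R hn ω hω0 hωl hv
  refine Or.inl ⟨pl_lt hn ω hω0 hωl h0, ?_⟩
  rw [fPerm_apply, fPerm_apply, fWord, fWord, if_pos (pl_L hn ω hω0 hωl h0),
    if_neg (by simp [hv])]
  exact lt_of_lt_of_le (pr_lt hn ω hω0 hωl hv) (nl_pl_ge hn ω hω0 hωl h0)

lemma adj_nr_of_L {v : Fin n} (hv : ω v = true) :
    (permGraph (fPerm hn ω hω0 hωl)).Adj v (NR hn ω v) := by
  have hlast : v.val < n - 1 := ne_last_of_L hn ω hω0 hωl hv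
  refine Or.inl ⟨nr_gt hn ω hω0 hωl hlast, ?_⟩
  rw [fPerm_apply, fPerm_apply, fWord, fWord, if_pos hv,
    if_neg (by simp [nr_R hn ω hω0 hωl hlast])]
  exact lt_of_le_of_lt (pr_nr_le hn ω hω0 hωl hlast) (nl_gt hn ω hω0 hωl hv)

lemma adj_pl_nr_of_L {v : Fin n} (hv : ω v = true) (h0 : 0 < v.val) :
    (permGraph (fPerm hn ω hω0 hωl)).Adj (PL hn ω v) (NR hn ω v) := by
  have hlast : v.val < n - 1 := ne_last_of_L hn ω hω0 hωl hv
  have h1 : PL hn ω v < v := pl_lt hn ω hω0 hωl h0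
  have h2 : v < NR hn ω v := nr_gt hn ω hω0 hωl hlast
  refine Or.inl ⟨lt_trans h1 h2, ?_⟩
  rw [fPerm_apply, fPerm_apply, fWord, fWord, if_pos (pl_L hn ω hω0 hωl h0),
    if_neg (by simp [nr_R hn ω hω0 hωl hlast])]
  have h3 : PR hn ω (NR hn ω v) ≤ v := pr_nr_le hn ω hω0 hωl hlast
  have h4 : PR hn ω (NR hn ω v) ≠ v := by
    intro h
    rcases pr_R_or_zero hn ω hω0 hωl (j := NR hn ω v) with hR | hR
    · rw [h] at hR; rw [hR] at hv; simp at hv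
    · rw [h] at hR; rw [hR] at h0; simp at h0
  exact lt_of_lt_of_le (lt_of_le_of_ne h3 h4) (nl_pl_ge hn ω hω0 hωl h0)

lemma reach_zero (v : Fin n) :
    (permGraph (fPerm hn ω hω0 hωl)).Reachable v ⟨0, pos_of_two_le_aux hn⟩ := by
  have key : ∀ m : ℕ, ∀ v : Fin n, v.val = m →
      (permGraph (fPerm hn ω hω0 hωl)).Reachable v ⟨0, pos_of_two_le_aux hn⟩ := by
    intro m
    induction m using Nat.strong_induction_on with
    | _ m IH =>
      intro v hm
      rcases Nat.eq_zero_or_pos v.val with h0 | h0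
      · rw [show v = (⟨0, pos_of_two_le_aux hn⟩ : Fin n) from Fin.ext (by simpa using h0)]
      · cases hv : ω v with
        | false =>
          have hadj := adj_pl_of_R hn ω hω0 hωl hv
          have hlt : (PL hn ω v).val < m := by
            rw [← hm]; exact pl_lt hn ω hω0 hωl h0
          exact (hadj.symm.reachable).trans (IH _ hlt _ rfl)
        | true =>
          have hadj1 := adj_nr_of_L hn ω hω0 hωl hv
          have hadj2 := adj_pl_nr_of_L hn ω hω0 hωl hv h0
          have hlt : (PL hn ω v).val < m := by
            rw [← hm]; exact pl_lt hn ω hω0 hωl h0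
          exact (hadj1.reachable.trans hadj2.symm.reachable).trans (IH _ hlt _ rfl)
  exact key v.val v rfl

lemma fPerm_connected : (permGraph (fPerm hn ω hω0 hωl)).Connected := by
  rw [SimpleGraph.connected_iff]
  refine ⟨fun a b => (reach_zero hn ω hω0 hωl a).trans (reach_zero hn ω hω0 hωl b).symm, ⟨⟨0, pos_of_two_le_aux hn⟩⟩⟩

end Conn

section Acyclic

variable (hn : 2 ≤ n) (ω : Fin n → Bool)
  (hω0 : ω ⟨0, pos_of_two_le_aux hn⟩ = true) (hωl : ω ⟨n-1, sub_one_lt_of_two_le_aux hn⟩ = false)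

/-- parent map orienting the permutation graph of `fPerm` as a tree. -/
noncomputable def parentF : Fin n → Fin n := fun v =>
  if ω v = true then NR hn ω v else PL hn ω (PR hn ω v)

/-- measure decreasing towards the root along `parentF`. -/
noncomputable def muF : Fin n → ℕ := fun v =>
  if ω v = true then 2 * v.val + 2 else 2 * (PR hn ω v).val + 1

include hn ω hω0 hωl

lemma adj_pattern {a b : Fin n} (hab : a < b) (hv : fWord hn ω b < fWord hn ω a) :
    ω a = true ∧ ω b = false := by
  cases ha : ω a <;> cases hb : ω b
  · exact absurd hv (not_lt.2 (le_of_lt (mono_RR hn ω hω0 hωl hab ha hb)))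
  · exact absurd hv (not_lt.2 (le_of_lt (mono_RL hn ω hω0 hωl hab ha hb)))
  · exact ⟨rfl, rfl⟩
  · exact absurd hv (not_lt.2 (le_of_lt (mono_LL hn ω hω0 hωl hab ha hb)))

lemma parent_spec {a b : Fin n} (hab : a < b) (hv : fWord hn ω b < fWord hn ω a) :
    (parentF hn ω a = b ∧ muF hn ω b < muF hn ω a) ∨
    (parentF hn ω b = a ∧ muF hn ω a < muF hn ω b) := by
  obtain ⟨ha, hb⟩ := adj_pattern hn ω hω0 hωl hab hv
  rw [fWord, fWord, if_pos ha, if_neg (by simp [hb])] at hv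
  have hlasta : a.val < n - 1 := ne_last_of_L hn ω hω0 hωl ha
  rcases lt_trichotomy a (PR hn ω b) with hc | hc | hc
  · -- a < PR b : b's parent is a
    right
    have hPRpos : 0 < (PR hn ω b).val := by
      rw [Fin.lt_def] at hc; omega
    constructor
    · rw [parentF, if_neg (by simp [hb])]
      apply le_antisymm
      · by_contra h
        rw [not_le] at h
        have hL : ω (PL hn ω (PR hn ω b)) = true := pl_L hn ω hω0 hωl hPRpos
        have h1 : NL hn ω a ≤ PL hn ω (PR hn ω b) := nl_min hn ω hω0 hωl h hL
        have h2 : PL hn ω (PR hn ω b) < PR hn ω b := pl_lt hn ω hω0 hωl hPRpos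
        exact absurd hv (not_lt.2 (le_of_lt (lt_of_le_of_lt h1 h2)))
      · exact pl_max hn ω hω0 hωl hPRpos hc ha
    · rw [muF, muF, if_pos ha, if_neg (by simp [hb])]
      rw [Fin.lt_def] at hc
      omega
  · -- a = PR b : first R case, a's parent is b
    left
    have hzero : PR hn ω b = ⟨0, pos_of_two_le_aux hn⟩ := by
      rcases pr_R_or_zero hn ω hω0 hωl (j := b) with hR | hR
      · rw [← hc] at hR; rw [hR] at ha; simp at ha
      · exact hR
    constructor
    · rw [parentF, if_pos ha]
      apply le_antisymm
      · exact nr_min hn ω hω0 hωl hlasta hab hb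
      · by_contra h
        rw [not_le] at h
        have hR : ω (NR hn ω a) = false := nr_R hn ω hω0 hωl hlasta
        have h1 : NR hn ω a ≤ PR hn ω b := pr_max hn ω hω0 hωl h hR
        have h2 : a < NR hn ω a := nr_gt hn ω hω0 hωl hlasta
        rw [← hc] at h1
        exact absurd h2 (not_lt.2 h1)
    · rw [muF, muF, if_pos ha, if_neg (by simp [hb]), hzero]
      simp
  · -- PR b < a : a's parent is b
    left
    constructor
    · rw [parentF, if_pos ha]
      apply le_antisymm
      · exact nr_min hn ω hω0 hωl hlasta hab hb
      · by_contra h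
        rw [not_le] at h
        have hR : ω (NR hn ω a) = false := nr_R hn ω hω0 hωl hlasta
        have h1 : NR hn ω a ≤ PR hn ω b := pr_max hn ω hω0 hωl h hR
        have h2 : a < NR hn ω a := nr_gt hn ω hω0 hωl hlasta
        exact absurd (lt_trans h2 (lt_of_le_of_lt h1 hc)) (lt_irrefl a)
    · rw [muF, muF, if_pos ha, if_neg (by simp [hb])]
      rw [Fin.lt_def] at hc
      omega

lemma fPerm_acyclic : (permGraph (fPerm hn ω hω0 hωl)).IsAcyclic := by
  apply acyclic_of_parent _ (parentF hn ω) (muF hn ω)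
  intro a b hadj
  rcases hadj with ⟨hab, hv⟩ | ⟨hab, hv⟩
  · exact parent_spec hn ω hω0 hωl hab hv
  · exact Or.symm (parent_spec hn ω hω0 hωl hab hv)

lemma fPerm_isTree : (permGraph (fPerm hn ω hω0 hωl)).IsTree :=
  ⟨fPerm_connected hn ω hω0 hωl, fPerm_acyclic hn ω hω0 hωl⟩

end Acyclic

section Counting

variable {τ : Equiv.Perm (Fin n)}

lemma card_lt_val (τ : Equiv.Perm (Fin n)) (x : Fin n) :
    ((univ : Finset (Fin n)).filter fun k => τ k < τ x).card = (τ x).val := by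
  have himg : (univ : Finset (Fin n)).filter (fun k => τ k < τ x)
      = (Finset.Iio (τ x)).image τ.symm := by
    ext k
    simp only [Finset.mem_filter, Finset.mem_univ, true_and, Finset.mem_image, Finset.mem_Iio]
    constructor
    · intro h; exact ⟨τ k, h, τ.symm_apply_apply k⟩
    · rintro ⟨y, hy, rfl⟩; rwa [τ.apply_symm_apply]
  rw [himg, Finset.card_image_of_injective _ τ.symm.injective, Fin.card_Iio]

lemma degL {i : Fin n} (hi : IsLtrMax τ i) :
    (τ i).val = i.val + ((univ : Finset (Fin n)).filter fun k => i < k ∧ τ k < τ i).card := by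
  have hsplit : (univ : Finset (Fin n)).filter (fun k => τ k < τ i)
      = Finset.Iio i ∪ (univ.filter fun k => i < k ∧ τ k < τ i) := by
    ext k
    simp only [Finset.mem_filter, Finset.mem_univ, true_and, Finset.mem_union, Finset.mem_Iio]
    constructor
    · intro h
      rcases lt_trichotomy k i with hk | hk | hk
      · exact Or.inl hk
      · exact absurd h (by rw [hk]; exact lt_irrefl _)
      · exact Or.inr ⟨hk, h⟩
    · rintro (hk | ⟨_, hk⟩)
      · exact hi k hk
      · exact hk
  have hdisj : Disjoint (Finset.Iio i) (univ.filter fun k => i < k ∧ τ k < τ i) := by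
    rw [Finset.disjoint_left]
    intro k hk1 hk2
    rw [Finset.mem_Iio] at hk1
    rw [Finset.mem_filter] at hk2
    exact absurd (lt_trans hk1 hk2.2.1) (lt_irrefl k)
  have := card_lt_val τ i
  rw [hsplit, Finset.card_union_of_disjoint hdisj, Fin.card_Iio] at this
  omega

lemma degR {j : Fin n} (hj : IsRtlMin τ j) :
    j.val = (τ j).val + ((univ : Finset (Fin n)).filter fun k => k < j ∧ τ j < τ k).card := by
  have hsplit : (Finset.Iio j : Finset (Fin n))
      = (univ.filter fun k => τ k < τ j) ∪ (univ.filter fun k => k < j ∧ τ j < τ k) := by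
    ext k
    simp only [Finset.mem_filter, Finset.mem_univ, true_and, Finset.mem_union, Finset.mem_Iio]
    constructor
    · intro h
      rcases lt_trichotomy (τ k) (τ j) with hk | hk | hk
      · exact Or.inl hk
      · exact absurd (τ.injective hk) (ne_of_lt h)
      · exact Or.inr ⟨h, hk⟩
    · rintro (hk | ⟨hk, _⟩)
      · by_contra h
        rw [not_lt] at h
        rcases lt_or_eq_of_le h with h | h
        · exact absurd (hj k h) (not_lt.2 hk.le)
        · rw [← h] at hk; exact absurd hk (lt_irrefl _)
      · exact hk
  have hdisj : Disjoint ((univ : Finset (Fin n)).filter fun k => τ k < τ j)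
      (univ.filter fun k => k < j ∧ τ j < τ k) := by
    rw [Finset.disjoint_left]
    intro k hk1 hk2
    rw [Finset.mem_filter] at hk1 hk2
    exact absurd (lt_trans hk1.2 hk2.2.2) (lt_irrefl _)
  have hcard := card_lt_val τ j
  have hIio : (Finset.Iio j : Finset (Fin n)).card = j.val := Fin.card_Iio j
  rw [hsplit, Finset.card_union_of_disjoint hdisj, hcard] at hIio
  omega

end Counting

section Uniq

variable (hn : 2 ≤ n) (ω : Fin n → Bool)
  (hω0 : ω ⟨0, pos_of_two_le_aux hn⟩ = true) (hωl : ω ⟨n-1, sub_one_lt_of_two_le_aux hn⟩ = false)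
  (τ : Equiv.Perm (Fin n)) (htree : (permGraph τ).IsTree)
  (hcode : ∀ i : Fin n, ω i = true ↔ IsLtrMax τ i)

include hn ω hω0 hωl τ htree hcode

lemma hRtl : ∀ i : Fin n, ω i = false ↔ IsRtlMin τ i := by
  intro i
  have := ltrMax_iff_not_rtlMin hn τ htree i
  constructor
  · intro h
    by_contra hR
    have : IsLtrMax τ i := this.2 hR
    rw [← hcode i] at this
    rw [h] at this; simp at this
  · intro hR
    by_contra h
    simp only [Bool.not_eq_false] at h
    exact (this.1 ((hcode i).1 h)) hR

lemma uniq_L {i : Fin n} (hi : ω i = true) : τ i = NL hn ω i := by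
  have hLtrI : IsLtrMax τ i := (hcode i).1 hi
  rw [NL]
  split
  case isFalse hne =>
    -- no L after i : τ i is the maximal value
    set y := τ.symm ⟨n-1, sub_one_lt_of_two_le_aux hn⟩ with hy
    have hty : τ y = ⟨n-1, sub_one_lt_of_two_le_aux hn⟩ := τ.apply_symm_apply _
    have hymax : IsLtrMax τ y := by
      intro j hj
      rw [hty, Fin.lt_def]
      have : (τ j).val ≤ n - 1 := by omega
      rcases lt_or_eq_of_le this with h | h
      · simpa using h
      · exfalso
        have : τ j = τ y := by rw [hty]; exact Fin.ext (by simpa using h)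
        exact absurd (τ.injective this) (ne_of_lt hj)
    have hyL : ω y = true := (hcode y).2 hymax
    have hiy : i = y := by
      rcases lt_trichotomy i y with h | h | h
      · exact absurd ⟨y, by rw [Finset.mem_filter]; exact ⟨Finset.mem_univ _, hyL, h⟩⟩ hne
      · exact h
      · exfalso
        have := hLtrI y h
        rw [hty, Fin.lt_def] at this
        have h1 : n - 1 < (τ i).val := by simpa using this
        have h2 := (τ i).isLt
        omega
    rw [hiy, hty]
  case isTrue hne =>
    set q := (univ.filter fun k => ω k = true ∧ i < k).min' hne with hq
    have hqmem := Finset.min'_mem _ hne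
    rw [Finset.mem_filter] at hqmem
    have hqL : ω q = true := hqmem.2.1
    have hiq : i < q := hqmem.2.2
    have hbetween : ∀ k : Fin n, i < k → k < q → ω k = false := by
      intro k h1 h2
      by_contra hk
      simp only [Bool.not_eq_false] at hk
      have : q ≤ k := Finset.min'_le _ _ (by rw [Finset.mem_filter]; exact ⟨Finset.mem_univ _, hk, h1⟩)
      exact absurd h2 (not_lt.2 this)
    clear_value q
    have hLtrQ : IsLtrMax τ q := (hcode q).1 hqL
    have hτiq : τ i < τ q := hLtrQ i hiq
    -- Step A : all positions strictly between i and q have value < τ i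
    have stepA : ∀ r : Fin n, i < r → r < q → τ r < τ i := by
      have key : ∀ m : ℕ, ∀ r : Fin n, r.val = m → i < r → r < q → τ r < τ i := by
        intro m
        induction m using Nat.strong_induction_on with
        | _ m IH =>
          intro r hm h1 h2
          have hrR : ω r = false := hbetween r h1 h2
          have : ¬ IsLtrMax τ r := by
            intro h; rw [← hcode r] at h; rw [hrR] at h; simp at h
          rw [IsLtrMax] at this
          push_neg at this
          obtain ⟨k, hk1, hk2⟩ := this
          have hk2' : τ r < τ k := lt_of_le_of_ne hk2 (fun h => (ne_of_lt hk1) (τ.injective h).symm)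
          rcases lt_trichotomy k i with h | h | h
          · exact lt_trans hk2' (hLtrI k h)
          · rw [h] at hk2'; exact hk2'
          · exact lt_trans hk2' (IH k.val (by omega) k rfl h (lt_trans hk1 h2))
      intro r; exact key r.val r rfl
    set A := (univ : Finset (Fin n)).filter fun k => i < k ∧ τ k < τ i with hA
    clear_value A
    have hcardA : (τ i).val = i.val + A.card := by rw [hA]; exact degL hLtrI
    -- Step B : no overshoot
    have stepB : ¬ (q < τ i) := by
      intro hover
      set A2 := A.filter (fun k => q < k) with hA2
      have hsub : A ⊆ Finset.Ioo i q ∪ A2 := by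
        intro k hk
        have hk' := hk
        rw [hA, Finset.mem_filter] at hk'
        rw [Finset.mem_union, Finset.mem_Ioo]
        rcases lt_trichotomy k q with h | h | h
        · exact Or.inl ⟨hk'.2.1, h⟩
        · exfalso; rw [h] at hk'; exact absurd (lt_trans hk'.2.2 hτiq) (lt_irrefl _)
        · exact Or.inr (by rw [hA2, Finset.mem_filter]; exact ⟨hk, h⟩)
      have hcard2 : A.card ≤ (q.val - i.val - 1) + A2.card := by
        calc A.card ≤ (Finset.Ioo i q ∪ A2).card := Finset.card_le_card hsub
        _ ≤ (Finset.Ioo i q).card + A2.card := Finset.card_union_le _ _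
        _ = (q.val - i.val - 1) + A2.card := by rw [Fin.card_Ioo]
      have h2le : 2 ≤ A2.card := by
        rw [Fin.lt_def] at hover hiq
        omega
      obtain ⟨w1, hw1, w2, hw2, hww⟩ := Finset.one_lt_card.1 (show 1 < A2.card by omega)
      rw [hA2, Finset.mem_filter, hA, Finset.mem_filter] at hw1 hw2
      obtain ⟨⟨_, hiw1, hvw1⟩, hqw1⟩ := hw1
      obtain ⟨⟨_, hiw2, hvw2⟩, hqw2⟩ := hw2
      have e1 : (permGraph τ).Adj i w1 := Or.inl ⟨hiw1, hvw1⟩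
      have e2 : (permGraph τ).Adj w1 q := Or.inr ⟨hqw1, lt_trans hvw1 hτiq⟩
      have e3 : (permGraph τ).Adj q w2 := Or.inl ⟨hqw2, lt_trans hvw2 hτiq⟩
      have e4 : (permGraph τ).Adj w2 i := Or.inr ⟨hiw2, hvw2⟩
      exact no_square htree.IsAcyclic e1 e2 e3 e4 (ne_of_lt hiq) hww
    -- Step C : no undershoot
    have stepC : ¬ (τ i < q) := by
      intro hunder
      have hsub : Finset.Ioo i q ⊆ A := by
        intro k hk
        rw [Finset.mem_Ioo] at hk
        rw [hA, Finset.mem_filter]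
        exact ⟨Finset.mem_univ _, hk.1, stepA k hk.1 hk.2⟩
      have hcardIoo : (Finset.Ioo i q).card = q.val - i.val - 1 := Fin.card_Ioo i q
      have hAcard_le : A.card ≤ q.val - i.val - 1 := by
        rw [Fin.lt_def] at hunder hiq
        omega
      have hAeq : A = Finset.Ioo i q :=
        (Finset.eq_of_subset_of_card_le hsub (by omega)).symm
      have hτival : (τ i).val = q.val - 1 := by
        rw [Fin.lt_def] at hiq
        rw [hAeq, hcardIoo] at hcardA
        rw [Fin.lt_def] at hunder
        omega
      -- decomposition at q
      apply no_decomp τ htree.isConnected (c := q.val) (by rw [Fin.lt_def] at hiq; omega) q.isLt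
      intro k hk
      rcases lt_trichotomy k i with h | h | h
      · have := hLtrI k h
        rw [Fin.lt_def] at this
        omega
      · rw [h]; omega
      · have hkq : k < q := Fin.lt_def.2 hk
        have := stepA k h hkq
        rw [Fin.lt_def] at this
        omega
    rcases lt_trichotomy (τ i) q with h | h | h
    · exact absurd h stepC
    · exact h
    · exact absurd h stepB

lemma uniq_R {j : Fin n} (hj : ω j = false) : τ j = PR hn ω j := by
  have hRtlJ : IsRtlMin τ j := (hRtl hn ω hω0 hωl τ htree hcode j).1 hj
  rw [PR]
  split
  case isFalse hne =>
    -- no R before j : τ j is the minimal value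
    set z := τ.symm ⟨0, pos_of_two_le_aux hn⟩ with hz
    have htz : τ z = ⟨0, pos_of_two_le_aux hn⟩ := τ.apply_symm_apply _
    have hz0 : 0 < z.val := by
      rcases Nat.eq_zero_or_pos z.val with h | h
      · exfalso
        have hzeq : z = ⟨0, pos_of_two_le_aux hn⟩ := Fin.ext (by simpa using h)
        apply no_decomp τ htree.isConnected (c := 1) (by omega) (by omega)
        intro k hk
        have : k = (⟨0, pos_of_two_le_aux hn⟩ : Fin n) := Fin.ext (by omega)
        rw [this, ← hzeq, htz]
        simp
      · exact h
    have hzmin : IsRtlMin τ z := by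
      intro k hk
      rw [htz, Fin.lt_def]
      have : (τ k).val ≠ 0 := by
        intro h
        have : τ k = τ z := by rw [htz]; exact Fin.ext (by simpa using h)
        exact absurd (τ.injective this) (ne_of_gt hk)
      simpa using Nat.pos_of_ne_zero this
    have hzR : ω z = false := (hRtl hn ω hω0 hωl τ htree hcode z).2 hzmin
    have hjz : j = z := by
      rcases lt_trichotomy z j with h | h | h
      · exact absurd ⟨z, by rw [Finset.mem_filter]; exact ⟨Finset.mem_univ _, hzR, h⟩⟩ hne
      · exact h.symm
      · exfalso
        have := hRtlJ z h
        rw [htz, Fin.lt_def] at this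
        simp at this
    rw [hjz, htz]
  case isTrue hne =>
    set p := (univ.filter fun k => ω k = false ∧ k < j).max' hne with hp
    have hpmem := Finset.max'_mem _ hne
    rw [Finset.mem_filter] at hpmem
    have hpR : ω p = false := hpmem.2.1
    have hpj : p < j := hpmem.2.2
    have hbetween : ∀ k : Fin n, p < k → k < j → ω k = true := by
      intro k h1 h2
      by_contra hk
      simp only [Bool.not_eq_true] at hk
      have : k ≤ p := Finset.le_max' _ _ (by rw [Finset.mem_filter]; exact ⟨Finset.mem_univ _, hk, h2⟩)
      exact absurd h1 (not_lt.2 this)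
    clear_value p
    have hRtlP : IsRtlMin τ p := (hRtl hn ω hω0 hωl τ htree hcode p).1 hpR
    have hτpj : τ p < τ j := hRtlP j hpj
    -- Step A : all positions strictly between p and j have value > τ j
    have stepA : ∀ r : Fin n, p < r → r < j → τ j < τ r := by
      have key : ∀ m : ℕ, ∀ r : Fin n, j.val - r.val = m → p < r → r < j → τ j < τ r := by
        intro m
        induction m using Nat.strong_induction_on with
        | _ m IH =>
          intro r hm h1 h2
          have hrL : ω r = true := hbetween r h1 h2
          have : ¬ IsRtlMin τ r :=
            (ltrMax_iff_not_rtlMin hn τ htree r).1 ((hcode r).1 hrL)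
          rw [IsRtlMin] at this
          push_neg at this
          obtain ⟨k, hk1, hk2⟩ := this
          have hk2' : τ k < τ r := lt_of_le_of_ne hk2 (fun h => (ne_of_lt hk1) (τ.injective h).symm)
          rcases lt_trichotomy k j with h | h | h
          · have hjk : j.val - k.val < m := by
              rw [Fin.lt_def] at hk1 h h2
              omega
            exact lt_trans (IH _ hjk k rfl (lt_trans h1 hk1) h) hk2'
          · rw [← h]; exact hk2'
          · exact lt_trans (hRtlJ k h) hk2'
      intro r h1 h2; exact key (j.val - r.val) r rfl h1 h2
    set B := (univ : Finset (Fin n)).filter fun k => k < j ∧ τ j < τ k with hB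
    clear_value B
    have hcardB : j.val = (τ j).val + B.card := by rw [hB]; exact degR hRtlJ
    -- Step B : no undershoot
    have stepB : ¬ (τ j < p) := by
      intro hunder
      set B2 := B.filter (fun k => k < p) with hB2
      clear_value B2
      have hsub : B ⊆ Finset.Ioo p j ∪ B2 := by
        intro k hk
        have hk' := hk
        rw [hB, Finset.mem_filter] at hk'
        rw [Finset.mem_union, Finset.mem_Ioo]
        rcases lt_trichotomy k p with h | h | h
        · exact Or.inr (by rw [hB2, Finset.mem_filter]; exact ⟨hk, h⟩)
        · exfalso; rw [h] at hk'; exact absurd (lt_trans hk'.2.2 hτpj) (lt_irrefl _)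
        · exact Or.inl ⟨h, hk'.2.1⟩
      have hcard2 : B.card ≤ (j.val - p.val - 1) + B2.card := by
        calc B.card ≤ (Finset.Ioo p j ∪ B2).card := Finset.card_le_card hsub
        _ ≤ (Finset.Ioo p j).card + B2.card := Finset.card_union_le _ _
        _ = (j.val - p.val - 1) + B2.card := by rw [Fin.card_Ioo]
      have h2le : 2 ≤ B2.card := by
        rw [Fin.lt_def] at hunder hpj
        omega
      obtain ⟨w1, hw1, w2, hw2, hww⟩ := Finset.one_lt_card.1 (show 1 < B2.card by omega)
      rw [hB2, Finset.mem_filter, hB, Finset.mem_filter] at hw1 hw2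
      obtain ⟨⟨_, hjw1, hvw1⟩, hpw1⟩ := hw1
      obtain ⟨⟨_, hjw2, hvw2⟩, hpw2⟩ := hw2
      have e1 : (permGraph τ).Adj w1 p := Or.inl ⟨hpw1, lt_trans hτpj hvw1⟩
      have e2 : (permGraph τ).Adj p w2 := Or.inr ⟨hpw2, lt_trans hτpj hvw2⟩
      have e3 : (permGraph τ).Adj w2 j := Or.inl ⟨hjw2, hvw2⟩
      have e4 : (permGraph τ).Adj j w1 := Or.inr ⟨hjw1, hvw1⟩
      exact no_square htree.IsAcyclic e1 e2 e3 e4 hww (ne_of_lt hpj)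
    -- Step C : no overshoot
    have stepC : ¬ (p < τ j) := by
      intro hover
      have hsub : Finset.Ioo p j ⊆ B := by
        intro k hk
        rw [Finset.mem_Ioo] at hk
        rw [hB, Finset.mem_filter]
        exact ⟨Finset.mem_univ _, hk.2, stepA k hk.1 hk.2⟩
      have hcardIoo : (Finset.Ioo p j).card = j.val - p.val - 1 := Fin.card_Ioo p j
      have hBcard_le : B.card ≤ j.val - p.val - 1 := by
        rw [Fin.lt_def] at hover hpj
        omega
      have hBeq : B = Finset.Ioo p j :=
        (Finset.eq_of_subset_of_card_le hsub (by omega)).symm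
      have hτjval : (τ j).val = p.val + 1 := by
        rw [Fin.lt_def] at hpj hover
        rw [hBeq, hcardIoo] at hcardB
        omega
      apply no_decomp τ htree.isConnected (c := p.val + 1)
        (by omega) (by rw [Fin.lt_def] at hpj; have := j.isLt; omega)
      intro k hk
      have hkj : k < j := by rw [Fin.lt_def]; rw [Fin.lt_def] at hpj; omega
      have hknB : k ∉ B := by
        rw [hBeq, Finset.mem_Ioo]
        intro hmem
        rw [Fin.lt_def] at hmem
        omega
      rw [hB, Finset.mem_filter] at hknB
      push_neg at hknB
      have := hknB (Finset.mem_univ _) hkj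
      have hne' : τ k ≠ τ j := fun h => (ne_of_lt hkj) (τ.injective h)
      have : τ k < τ j := lt_of_le_of_ne this hne'
      rw [Fin.lt_def] at this
      omega
    rcases lt_trichotomy (τ j) p with h | h | h
    · exact absurd h stepB
    · exact h
    · exact absurd h stepC

end Uniq

end TreePermAux

/-- For `n ≥ 2`: in a tree permutation every index is a left-to-right maximum or a
right-to-left minimum but not both; and encoding a tree permutation `τ` by the word
`ω_τ : Fin n → Bool` (with `true` = `L` at left-to-right maxima and `false` = `R`
elsewhere) gives a bijection from the set of tree permutations of length `n` onto the set
of words `ω` with `ω 1 = L` and `ω n = R`: every tree permutation has its code in this set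
of words, and to each such word corresponds a unique tree permutation. -/
theorem treePerm_code_bijection (n : ℕ) (hn : 2 ≤ n) :
    (∀ τ : Equiv.Perm (Fin n), IsTreePerm τ →
      ∀ i : Fin n, IsLtrMax τ i ↔ ¬ IsRtlMin τ i) ∧
    (∀ τ : Equiv.Perm (Fin n), IsTreePerm τ →
      IsLtrMax τ ⟨0, by omega⟩ ∧ ¬ IsLtrMax τ ⟨n - 1, by omega⟩) ∧
    (∀ ω : Fin n → Bool, ω ⟨0, by omega⟩ = true → ω ⟨n - 1, by omega⟩ = false →
      ∃! τ : Equiv.Perm (Fin n), IsTreePerm τ ∧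
        ∀ i : Fin n, (ω i = true ↔ IsLtrMax τ i)) := by
  refine ⟨?_, ?_, ?_⟩
  · intro τ htree i
    exact TreePermAux.ltrMax_iff_not_rtlMin hn τ htree i
  · intro τ htree
    constructor
    · intro j hj
      exact absurd hj (by rw [Fin.lt_def]; simp)
    · intro hL
      have hR : IsRtlMin τ ⟨n-1, by omega⟩ := by
        intro j hj
        exfalso
        rw [Fin.lt_def] at hj
        have := j.isLt
        simp at hj
        omega
      exact (TreePermAux.ltrMax_iff_not_rtlMin hn τ htree _).1 hL hR
  · intro ω hω0 hωl
    refine ⟨TreePermAux.fPerm hn ω hω0 hωl,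
      ⟨TreePermAux.fPerm_isTree hn ω hω0 hωl,
        fun i => TreePermAux.code_fPerm hn ω hω0 hωl i⟩, ?_⟩
    rintro τ ⟨htree, hcode⟩
    apply Equiv.ext
    intro i
    rw [TreePermAux.fPerm_apply, TreePermAux.fWord]
    cases hi : ω i with
    | true =>
      rw [if_pos rfl]
      exact TreePermAux.uniq_L hn ω hω0 hωl τ htree hcode hi
    | false =>
      rw [if_neg (by simp)]
      exact TreePermAux.uniq_R hn ω hω0 hωl τ htree hcode hi
end

section
/- Let f_n denote the number of forest permutations of length n, with the convention f_0 = 1. Then f_1 = 1 and f_n = 3·f_{n−1} − f_{n−2} for every n≥2. -/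
/-- `f n`: the number of forest permutations of length `n` (note that `f 0 = 1`, since the
empty permutation is vacuously a forest permutation). -/
noncomputable def numForestPerms (n : ℕ) : ℕ :=
  Set.ncard {π : Equiv.Perm (Fin n) | IsForestPerm π}

open Equiv SimpleGraph

namespace FPaux

section walks
variable {V : Type*} {W : Type*} {G : SimpleGraph V} {H : SimpleGraph W}

lemma mem_tail_support_closed {v : V} (p : G.Walk v v) (hp : ¬ p.Nil) {x : V}
    (hx : x ∈ p.support) : x ∈ p.support.tail := by
  have hd : p.darts ≠ [] := by
    intro h
    have := SimpleGraph.Walk.not_nil_iff_lt_length.mp hp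
    rw [← SimpleGraph.Walk.length_darts, h] at this
    simp at this
  have hv : v ∈ p.support.tail := by
    rw [← SimpleGraph.Walk.map_snd_darts]
    have h2 : (p.darts.getLast hd).snd = v := by simp
    have h3 : (p.darts.map (fun d => d.snd)).getLast (by simpa using hd) ∈
        p.darts.map (fun d => d.snd) := List.getLast_mem _
    rwa [List.getLast_map _ , h2] at h3
  rw [SimpleGraph.Walk.support_eq_cons p] at hx
  rcases List.mem_cons.mp hx with h | h
  · exact h ▸ hv
  · exact h

/-- In a cycle, every vertex of the support has two distinct neighbours in the support. -/
lemma cycle_two_nbrs {v u : V} {c : G.Walk v v} (hc : c.IsCycle) (hu : u ∈ c.support) :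
    ∃ a b, a ≠ b ∧ G.Adj u a ∧ G.Adj u b ∧ a ∈ c.support ∧ b ∈ c.support := by
  classical
  have hc' := hc.rotate hu
  set c' := c.rotate u hu with hc'def
  -- membership transfer from c' to c
  have hmem : ∀ x, x ∈ c'.support → x ∈ c.support := by
    intro x hx
    have hx' : x ∈ c'.support.tail :=
      mem_tail_support_closed c' hc'.not_nil hx
    have := (SimpleGraph.Walk.support_rotate c u hu).mem_iff.mp hx'
    exact List.mem_of_mem_tail this
  -- destructure c' = cons h q
  obtain ⟨w, hadj, q, hq⟩ := SimpleGraph.Walk.not_nil_iff.mp hc'.not_nil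
  -- q is not nil
  have hlen : 3 ≤ c'.length := hc'.three_le_length
  have hqnil : ¬ q.Nil := by
    rw [SimpleGraph.Walk.not_nil_iff_lt_length]
    have : c'.length = q.length + 1 := by rw [hq]; simp
    omega
  obtain ⟨w2, hadj2, r, hr⟩ := SimpleGraph.Walk.not_nil_iff.mp (by
    rw [SimpleGraph.Walk.not_nil_iff_lt_length] at hqnil ⊢
    simpa using hqnil : ¬ q.reverse.Nil)
  refine ⟨w, w2, ?_, hadj, hadj2, ?_, ?_⟩
  · intro hww
    subst hww
    have hcyc := hq ▸ hc'
    rw [SimpleGraph.Walk.cons_isCycle_iff] at hcyc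
    apply hcyc.2
    have : s(u, w) ∈ q.reverse.edges := by
      rw [hr]; simp [Sym2.eq_swap]
    simpa using this
  · apply hmem; rw [hq]; simp
  · apply hmem
    have : w2 ∈ q.support := by
      have : w2 ∈ q.reverse.support := by rw [hr]; simp
      simpa using this
    rw [hq]; simp [this]

lemma walk_pullback (f : V → W) (hinj : Function.Injective f)
    (hadj : ∀ a b, H.Adj (f a) (f b) → G.Adj a b) :
    ∀ {x y : W} (w : H.Walk x y), (∀ v ∈ w.support, ∃ a, f a = v) →
      ∀ (a b : V), f a = x → f b = y →
      ∃ w' : G.Walk a b, w'.support.map f = w.support ∧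
        w'.edges.map (Sym2.map f) = w.edges := by
  intro x y w
  induction w with
  | nil =>
    intro _ a b ha hb
    have : a = b := hinj (ha.trans hb.symm)
    subst this
    subst ha
    exact ⟨SimpleGraph.Walk.nil, by simp, by simp⟩
  | @cons x z y h w ih =>
    intro hsupp a b ha hb
    obtain ⟨c, hc⟩ := hsupp z (by simp)
    have hGa : G.Adj a c := hadj a c (by rw [ha, hc]; exact h)
    obtain ⟨w', hs, he⟩ := ih (fun v hv => hsupp v (by simp [hv])) c b hc hb
    exact ⟨SimpleGraph.Walk.cons hGa w', by simp [hs, ha], by simp [he, ha, hc]⟩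

/-- If `G` is acyclic and every vertex of a cycle in `H` comes from `V`,
we get a contradiction. -/
lemma no_cycle_of_pullback (f : V → W) (hinj : Function.Injective f)
    (hadj : ∀ a b, H.Adj (f a) (f b) → G.Adj a b) (hG : G.IsAcyclic)
    {x : W} (c : H.Walk x x) (hc : c.IsCycle)
    (hsupp : ∀ v ∈ c.support, ∃ a, f a = v) : False := by
  obtain ⟨a, ha⟩ := hsupp x (SimpleGraph.Walk.start_mem_support c)
  obtain ⟨w', hs, he⟩ := walk_pullback f hinj hadj c hsupp a a ha ha
  apply hG w'
  rw [SimpleGraph.Walk.isCycle_def] at hc ⊢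
  refine ⟨⟨?_⟩, ?_, ?_⟩
  · have := hc.1.edges_nodup
    rw [← he] at this
    exact this.of_map _
  · intro hnil
    subst hnil
    have h3 := hc.2.1
    have : c.support = [x] := by rw [← hs]; simp [ha]
    cases hc2 : c with
    | nil => exact h3 (by simp [hc2])
    | cons h q => rw [hc2] at this; simp at this
  · have := hc.2.2
    rw [← hs] at this
    rw [SimpleGraph.Walk.support_eq_cons w'] at this
    simp only [List.map_cons, List.tail_cons] at this
    exact this.of_map _

end walks

section cycles
variable {V : Type*} {G : SimpleGraph V}

lemma triangle_isCycle {a b c : V} (h1 : G.Adj a b) (h2 : G.Adj b c) (h3 : G.Adj c a)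
    (hac : a ≠ c) :
    (SimpleGraph.Walk.cons h1 (SimpleGraph.Walk.cons h2
      (SimpleGraph.Walk.cons h3 SimpleGraph.Walk.nil))).IsCycle := by
  have hab := h1.ne
  have hbc := h2.ne
  rw [SimpleGraph.Walk.isCycle_def]
  refine ⟨⟨?_⟩, by simp, ?_⟩
  · simp [Sym2.eq_iff]
    tauto
  · simp only [SimpleGraph.Walk.support_cons, SimpleGraph.Walk.support_nil,
      List.tail_cons, List.nodup_cons, List.mem_cons, List.mem_singleton,
      List.not_mem_nil, or_false, List.nodup_nil, and_true]
    push_neg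
    exact ⟨⟨hbc, fun h => hab h.symm⟩, fun h => hac h.symm, trivial⟩

lemma square_isCycle {a b c d : V} (h1 : G.Adj a b) (h2 : G.Adj b c) (h3 : G.Adj c d)
    (h4 : G.Adj d a) (hac : a ≠ c) (hbd : b ≠ d) :
    (SimpleGraph.Walk.cons h1 (SimpleGraph.Walk.cons h2 (SimpleGraph.Walk.cons h3
      (SimpleGraph.Walk.cons h4 SimpleGraph.Walk.nil)))).IsCycle := by
  have hab := h1.ne
  have hbc := h2.ne
  have hcd := h3.ne
  have hda := h4.ne
  rw [SimpleGraph.Walk.isCycle_def]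
  refine ⟨⟨?_⟩, by simp, ?_⟩
  · simp [Sym2.eq_iff]
    refine ⟨⟨?_,?_,?_⟩,⟨?_,?_⟩,?_⟩ <;> tauto
  · simp only [SimpleGraph.Walk.support_cons, SimpleGraph.Walk.support_nil,
      List.tail_cons, List.nodup_cons, List.mem_cons, List.mem_singleton,
      List.not_mem_nil, or_false, List.nodup_nil, and_true]
    push_neg
    exact ⟨⟨hbc, fun h => hbd h, fun h => hab h.symm⟩,
      ⟨hcd, fun h => hac h.symm⟩, fun h => hda h, trivial⟩

end cycles

section main
variable {m : ℕ}

lemma permGraph_adj {n : ℕ} (π : Perm (Fin n)) (i j : Fin n) :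
    (permGraph π).Adj i j ↔ (i < j ∧ π j < π i) ∨ (j < i ∧ π i < π j) := Iff.rfl

/-- Insert a new first entry with value `k` into a permutation. -/
def insPerm (q : Perm (Fin m)) (k : Fin (m + 1)) : Perm (Fin (m + 1)) :=
  (finSuccEquiv' 0).trans ((q.optionCongr).trans (finSuccEquiv' k).symm)

@[simp] lemma insPerm_zero (q : Perm (Fin m)) (k : Fin (m + 1)) : insPerm q k 0 = k := by
  simp [insPerm, finSuccEquiv'_at, finSuccEquiv'_symm_none]

@[simp] lemma insPerm_succ (q : Perm (Fin m)) (k : Fin (m + 1)) (j : Fin m) :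
    insPerm q k j.succ = k.succAbove (q j) := by
  have h0 : (finSuccEquiv' (0 : Fin (m+1))) j.succ = some j := by
    rw [← Fin.zero_succAbove j, finSuccEquiv'_succAbove]
  simp [insPerm, h0, finSuccEquiv'_symm_some]

lemma adj_succ_succ (q : Perm (Fin m)) (k : Fin (m + 1)) (i j : Fin m) :
    (permGraph (insPerm q k)).Adj i.succ j.succ ↔ (permGraph q).Adj i j := by
  simp only [permGraph, insPerm_succ]
  rw [Fin.succ_lt_succ_iff, Fin.succ_lt_succ_iff,
    Fin.succAbove_lt_succAbove_iff, Fin.succAbove_lt_succAbove_iff]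

lemma adj_zero_succ (q : Perm (Fin m)) (k : Fin (m + 1)) (j : Fin m) :
    (permGraph (insPerm q k)).Adj 0 j.succ ↔ ((q j : ℕ) < (k : ℕ)) := by
  simp only [permGraph, insPerm_succ, insPerm_zero]
  constructor
  · rintro (⟨-, h⟩ | ⟨h, -⟩)
    · have := (Fin.succAbove_lt_iff_castSucc_lt k (q j)).mp h
      simpa [Fin.lt_def] using this
    · exact absurd h (by simp [Fin.lt_def])
  · intro h
    left
    refine ⟨Fin.succ_pos j, (Fin.succAbove_lt_iff_castSucc_lt k (q j)).mpr ?_⟩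
    simpa [Fin.lt_def] using h

lemma adj_cases (q : Perm (Fin m)) (k : Fin (m + 1)) (x : Fin (m+1)) :
    x = 0 ∨ ∃ i : Fin m, x = i.succ := by
  rcases Fin.eq_zero_or_eq_succ x with h | ⟨i, hi⟩
  · exact Or.inl h
  · exact Or.inr ⟨i, hi⟩




variable {q : Perm (Fin m)} {k : Fin (m + 1)}

lemma claim1 (hp : IsForestPerm (insPerm q k)) {i j : Fin m} (hij : i < j)
    (hi : (q i : ℕ) < k) (hj : (q j : ℕ) < k) : q i < q j := by
  by_contra hlt
  have hne : q j ≠ q i := fun h => (hij.ne (q.injective h.symm)).elim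
  have hji : q j < q i := lt_of_le_of_ne (not_lt.mp hlt) hne
  have h1 : (permGraph (insPerm q k)).Adj 0 i.succ := (adj_zero_succ q k i).mpr hi
  have h2 : (permGraph (insPerm q k)).Adj i.succ j.succ :=
    (adj_succ_succ q k i j).mpr (Or.inl ⟨hij, hji⟩)
  have h3 : (permGraph (insPerm q k)).Adj j.succ 0 := ((adj_zero_succ q k j).mpr hj).symm
  exact hp _ (triangle_isCycle h1 h2 h3 (Fin.succ_ne_zero j).symm)

lemma claim2 (hp : IsForestPerm (insPerm q k)) {s i j : Fin m} (hsi : s < i) (hij : i < j)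
    (hs : (k : ℕ) ≤ (q s : ℕ)) (hi : (q i : ℕ) < k) (hj : (q j : ℕ) < k) : False := by
  have h1 : (permGraph (insPerm q k)).Adj 0 i.succ := (adj_zero_succ q k i).mpr hi
  have h2 : (permGraph (insPerm q k)).Adj i.succ s.succ :=
    (adj_succ_succ q k i s).mpr (Or.inr ⟨hsi, by rw [Fin.lt_def]; omega⟩)
  have h3 : (permGraph (insPerm q k)).Adj s.succ j.succ :=
    (adj_succ_succ q k s j).mpr (Or.inl ⟨hsi.trans hij, by rw [Fin.lt_def]; omega⟩)
  have h4 : (permGraph (insPerm q k)).Adj j.succ 0 := ((adj_zero_succ q k j).mpr hj).symm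
  exact hp _ (square_isCycle h1 h2 h3 h4 (Fin.succ_ne_zero s).symm
    (by simp [Fin.ext_iff]; omega))

lemma card_filter_val_lt (c : ℕ) (hc : c ≤ m) :
    (Finset.univ.filter fun v : Fin m => (v : ℕ) < c).card = c := by
  have : (Finset.univ.filter fun v : Fin m => (v : ℕ) < c) =
      Finset.image (fun i : Fin c => Fin.castLE hc i) Finset.univ := by
    ext v
    simp only [Finset.mem_filter, Finset.mem_univ, true_and, Finset.mem_image]
    constructor
    · intro h; exact ⟨⟨(v : ℕ), h⟩, by simp [Fin.ext_iff]⟩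
    · rintro ⟨i, -, rfl⟩; simpa using i.isLt
  rw [this, Finset.card_image_of_injective _ (Fin.castLE_injective hc)]
  simp

lemma card_small : (Finset.univ.filter fun x : Fin m => (q x : ℕ) < (k : ℕ)).card = (k : ℕ) := by
  have h1 : (Finset.univ.filter fun x : Fin m => (q x : ℕ) < (k : ℕ)).card =
      (Finset.univ.filter fun v : Fin m => (v : ℕ) < (k : ℕ)).card := by
    apply Finset.card_bij (fun x _ => q x)
    · intro a ha; simp only [Finset.mem_filter, Finset.mem_univ, true_and] at ha ⊢; exact ha
    · intro a _ b _ h; exact q.injective h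
    · intro b hb
      refine ⟨q.symm b, ?_, by simp⟩
      simp only [Finset.mem_filter, Finset.mem_univ, true_and] at hb ⊢
      simpa using hb
  rw [h1, card_filter_val_lt _ (by omega : (k:ℕ) ≤ m)]

lemma positions_small (hp : IsForestPerm (insPerm q k)) {j : Fin m}
    (hj : (j : ℕ) + 1 < (k : ℕ)) : (q j : ℕ) < (k : ℕ) := by
  by_contra hqj
  push_neg at hqj
  set S := Finset.univ.filter fun x : Fin m => (q x : ℕ) < (k : ℕ) with hS
  have hcard : S.card = (k : ℕ) := card_small
  have hsplit := Finset.card_filter_add_card_filter_not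
    (s := S) (p := fun x => x ≤ j)
  have hle : (S.filter fun x => x ≤ j).card ≤ (j : ℕ) := by
    have hsub : (S.filter fun x => x ≤ j) ⊆ Finset.univ.filter fun v : Fin m => (v : ℕ) < (j:ℕ) := by
      intro x hx
      simp only [hS, Finset.mem_filter, Finset.mem_univ, true_and] at hx ⊢
      rcases hx with ⟨hxS, hxj⟩
      have : x ≠ j := by rintro rfl; omega
      have := lt_of_le_of_ne hxj this
      rwa [Fin.lt_def] at this
    calc (S.filter fun x => x ≤ j).card ≤ _ := Finset.card_le_card hsub
    _ = (j : ℕ) := card_filter_val_lt _ (by omega)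
  have hT : 1 < (S.filter fun x => ¬ x ≤ j).card := by omega
  obtain ⟨a, b, ha, hb, hab⟩ := Finset.one_lt_card_iff.mp hT
  simp only [hS, Finset.mem_filter, Finset.mem_univ, true_and, not_le] at ha hb
  rcases lt_or_gt_of_ne hab with h | h
  · exact claim2 hp ha.2 h hqj ha.1 hb.1
  · exact claim2 hp hb.2 h hqj hb.1 ha.1

lemma forcing (hp : IsForestPerm (insPerm q k)) :
    ∀ j : Fin m, (j : ℕ) + 1 < (k : ℕ) → q j = j := by
  have key : ∀ t : ℕ, ∀ j : Fin m, (j : ℕ) = t → (j : ℕ) + 1 < (k : ℕ) → q j = j := by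
    intro t
    induction t using Nat.strong_induction_on with
    | _ t ih =>
      rintro j rfl hj
      have hsmall : (q j : ℕ) < (k : ℕ) := positions_small hp hj
      -- q j ≥ j
      have hge : (j : ℕ) ≤ (q j : ℕ) := by
        by_contra hlt
        push_neg at hlt
        have hfix : q (q j) = q j := ih _ hlt (q j) rfl (by omega)
        have := q.injective hfix
        omega
      rcases eq_or_lt_of_le hge with heq | hgt
      · exact Fin.ext heq.symm
      · exfalso
        -- position of value j
        set t' := q.symm j with ht'
        have hqt' : q t' = j := q.apply_symm_apply j
        have ht'gt : (j : ℕ) < (t' : ℕ) := by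
          rcases lt_trichotomy ((t' : ℕ)) ((j : ℕ)) with h | h | h
          · have := ih _ h t' rfl (by omega)
            rw [this] at hqt'
            omega
          · exfalso; have : t' = j := Fin.ext h
            rw [this] at hqt'; omega
          · exact h
        have := claim1 hp (show j < t' by rwa [Fin.lt_def]) hsmall
          (by rw [hqt']; omega)
        rw [hqt', Fin.lt_def] at this
        omega
  intro j hj
  exact key _ j rfl hj



variable {q : Perm (Fin m)} {k : Fin (m + 1)}

def succHom (q : Perm (Fin m)) (k : Fin (m + 1)) :
    permGraph q →g permGraph (insPerm q k) :=
  ⟨Fin.succ, fun {a b} h => (adj_succ_succ q k a b).mpr h⟩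

lemma succHom_inj : Function.Injective (⇑(succHom q k)) :=
  fun a b h => Fin.succ_injective m h

lemma forest_of_insPerm (hp : IsForestPerm (insPerm q k)) : IsForestPerm q := by
  intro v c hc
  exact hp (c.map (succHom q k))
    ((SimpleGraph.Walk.map_isCycle_iff_of_injective succHom_inj).mpr hc)

lemma insPerm_forest (hq : IsForestPerm q)
    (hfix : ∀ j : Fin m, (j : ℕ) + 1 < (k : ℕ) → q j = j) : IsForestPerm (insPerm q k) := by
  intro v c hc
  have hfix' : ∀ i : Fin m, (q i : ℕ) + 1 < (k : ℕ) → q i = i ∧ (i : ℕ) + 1 < (k : ℕ) := by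
    intro i hi
    have h1 : q (q i) = q i := hfix _ hi
    have h2 : q i = i := q.injective h1
    exact ⟨h2, by rw [← h2]; exact hi⟩
  have hiso : ∀ i : Fin m, (q i : ℕ) + 1 < (k : ℕ) → ∀ x, ¬ (permGraph q).Adj i x := by
    intro i hi x hadj
    obtain ⟨hqi, hik⟩ := hfix' i hi
    rw [permGraph_adj] at hadj
    rcases hadj with ⟨hix, hlt⟩ | ⟨hxi, hlt⟩
    · have hx1 : (q x : ℕ) < (i : ℕ) := by
        rw [hqi] at hlt; rwa [Fin.lt_def] at hlt
      have hx2 : q (q x) = q x := hfix _ (by omega)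
      have hx3 : q x = x := q.injective hx2
      rw [Fin.lt_def] at hix
      omega
    · have hx0 : (x : ℕ) + 1 < (k : ℕ) := by rw [Fin.lt_def] at hxi; omega
      have hx3 : q x = x := hfix _ hx0
      rw [hx3, hqi, Fin.lt_def] at hlt
      rw [Fin.lt_def] at hxi
      omega
  have hleaf : ∀ i : Fin m, (q i : ℕ) + 1 < (k : ℕ) → i.succ ∉ c.support := by
    intro i hi hmem
    obtain ⟨a, b, hab, ha, hb, -, -⟩ := cycle_two_nbrs hc hmem
    have key : ∀ x, (permGraph (insPerm q k)).Adj i.succ x → x = 0 := by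
      intro x hx
      rcases Fin.eq_zero_or_eq_succ x with rfl | ⟨i', rfl⟩
      · rfl
      · exact absurd ((adj_succ_succ q k i i').mp hx) (hiso i hi i')
    exact hab ((key a ha).trans (key b hb).symm)
  have h0 : (0 : Fin (m + 1)) ∉ c.support := by
    intro hmem
    obtain ⟨a, b, hab, ha, hb, haS, hbS⟩ := cycle_two_nbrs hc hmem
    have key : ∀ x, (permGraph (insPerm q k)).Adj 0 x → x ∈ c.support →
        ∃ i : Fin m, x = i.succ ∧ (q i : ℕ) + 1 = (k : ℕ) := by
      intro x hx hxS
      rcases Fin.eq_zero_or_eq_succ x with rfl | ⟨i, rfl⟩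
      · exact absurd rfl hx.ne
      · have h1 : (q i : ℕ) < (k : ℕ) := (adj_zero_succ q k i).mp hx
        refine ⟨i, rfl, ?_⟩
        by_contra hne
        exact hleaf i (by omega) hxS
    obtain ⟨i, rfl, hi⟩ := key a ha haS
    obtain ⟨i', rfl, hi'⟩ := key b hb hbS
    have : q i = q i' := Fin.ext (by omega)
    exact hab (by rw [q.injective this])
  exact no_cycle_of_pullback Fin.succ (Fin.succ_injective m)
    (fun a b h => (adj_succ_succ q k a b).mp h) hq c hc
    (fun x hx => by
      rcases Fin.eq_zero_or_eq_succ x with rfl | ⟨i, rfl⟩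
      · exact absurd hx h0
      · exact ⟨i, rfl⟩)

theorem forest_insPerm_iff :
    IsForestPerm (insPerm q k) ↔
      IsForestPerm q ∧ ∀ j : Fin m, (j : ℕ) + 1 < (k : ℕ) → q j = j :=
  ⟨fun h => ⟨forest_of_insPerm h, forcing h⟩, fun ⟨h1, h2⟩ => insPerm_forest h1 h2⟩
lemma optionCongr_removeNone {α β : Type*} (e : Option α ≃ Option β) (h : e none = none) :
    Equiv.optionCongr (Equiv.removeNone e) = e := by
  ext x
  cases x with
  | none => simp [h]
  | some a =>
    have hne : e (some a) ≠ none := by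
      rw [← h]; exact fun hh => by simpa using e.injective hh
    obtain ⟨b, hb⟩ := Option.ne_none_iff_exists'.mp hne
    simp only [optionCongr_apply, Option.map_some]
    rw [← Equiv.removeNone_some e ⟨b, hb⟩]

/-- Insertion at position `0` with value `k`, as an equivalence onto `{p // p 0 = k}`. -/
def insEquiv (k : Fin (m + 1)) : Perm (Fin m) ≃ {p : Perm (Fin (m + 1)) // p 0 = k} where
  toFun q := ⟨insPerm q k, insPerm_zero q k⟩
  invFun p := Equiv.removeNone ((finSuccEquiv' 0).symm.trans (p.1.trans (finSuccEquiv' k)))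
  left_inv q := by
    have : (finSuccEquiv' (0:Fin (m+1))).symm.trans ((insPerm q k).trans (finSuccEquiv' k)) =
        Equiv.optionCongr q := by
      ext x; simp [insPerm]
    show Equiv.removeNone _ = q
    rw [show ((⟨insPerm q k, insPerm_zero q k⟩ : {p : Perm (Fin (m+1)) // p 0 = k}) : Perm (Fin (m+1))) = insPerm q k from rfl, this, Equiv.removeNone_optionCongr]
  right_inv p := by
    have hnone : ((finSuccEquiv' 0).symm.trans (p.1.trans (finSuccEquiv' k))) none = none := by
      simp [finSuccEquiv'_symm_none, p.2, finSuccEquiv'_at]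
    ext x
    have := optionCongr_removeNone _ hnone
    simp only [insPerm]
    rw [this]
    simp

lemma insEquiv_coe (k : Fin (m + 1)) (q : Perm (Fin m)) :
    ((insEquiv k q : {p : Perm (Fin (m + 1)) // p 0 = k}) : Perm (Fin (m+1))) = insPerm q k := rfl

/-- The number of forest permutations of `Fin m` fixing the first `r` points. -/
noncomputable def N (m r : ℕ) : ℕ :=
  Nat.card {q : Perm (Fin m) // IsForestPerm q ∧ ∀ j : Fin m, (j : ℕ) < r → q j = j}

lemma numForestPerms_eq_card (n : ℕ) :
    numForestPerms n = Nat.card {π : Perm (Fin n) // IsForestPerm π} := by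
  rw [numForestPerms, ← Nat.card_coe_set_eq]
  rfl

lemma N_zero (m : ℕ) : N m 0 = numForestPerms m := by
  rw [numForestPerms_eq_card, N]
  exact Nat.card_congr (Equiv.subtypeEquivRight (fun q => by simp))

/-- The fiber of forest permutations with `p 0 = k`. -/
lemma fiber_card (k : Fin (m + 1)) :
    Nat.card {p : Perm (Fin (m + 1)) // IsForestPerm p ∧ p 0 = k} = N m ((k : ℕ) - 1) := by
  rw [N]
  have e1 : {q : Perm (Fin m) // IsForestPerm q ∧ ∀ j : Fin m, (j : ℕ) < (k : ℕ) - 1 → q j = j} ≃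
      {q : Perm (Fin m) // IsForestPerm q ∧ ∀ j : Fin m, (j : ℕ) + 1 < (k : ℕ) → q j = j} :=
    Equiv.subtypeEquivRight
      (fun q => and_congr_right fun _ => forall_congr' fun j => by
        constructor <;> (intro h hj; exact h (by omega)))
  have e2 : {q : Perm (Fin m) // IsForestPerm q ∧ ∀ j : Fin m, (j : ℕ) + 1 < (k : ℕ) → q j = j} ≃
      {x : {p : Perm (Fin (m+1)) // p 0 = k} // IsForestPerm (x : Perm (Fin (m+1)))} :=
    (insEquiv k).subtypeEquiv fun q =>
      (insEquiv_coe k q ▸ forest_insPerm_iff.symm :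
        (IsForestPerm q ∧ ∀ j : Fin m, (j : ℕ) + 1 < (k : ℕ) → q j = j) ↔
          IsForestPerm ((insEquiv k q : {p : Perm (Fin (m+1)) // p 0 = k}) : Perm (Fin (m+1))))
  have e3 : {x : {p : Perm (Fin (m+1)) // p 0 = k} // IsForestPerm (x : Perm (Fin (m+1)))} ≃
      {p : Perm (Fin (m+1)) // p 0 = k ∧ IsForestPerm p} :=
    Equiv.subtypeSubtypeEquivSubtypeInter (fun p : Perm (Fin (m+1)) => p 0 = k) IsForestPerm
  have e4 : {p : Perm (Fin (m+1)) // p 0 = k ∧ IsForestPerm p} ≃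
      {p : Perm (Fin (m+1)) // IsForestPerm p ∧ p 0 = k} :=
    Equiv.subtypeEquivRight (fun p => and_comm)
  exact Nat.card_congr (e1.trans (e2.trans (e3.trans e4))).symm

lemma nat_card_sigma {ι : Type*} [Fintype ι] (f : ι → Type*) [∀ i, Finite (f i)] :
    Nat.card (Σ i, f i) = ∑ i, Nat.card (f i) := by
  letI : ∀ i, Fintype (f i) := fun i => Fintype.ofFinite _
  simp [Nat.card_eq_fintype_card]

lemma card_sum (m : ℕ) :
    numForestPerms (m + 1) = ∑ k : Fin (m + 1), N m ((k : ℕ) - 1) := by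
  rw [numForestPerms_eq_card]
  have e : {p : Perm (Fin (m+1)) // IsForestPerm p} ≃
      Σ k : Fin (m+1), {p : Perm (Fin (m+1)) // IsForestPerm p ∧ p 0 = k} := by
    refine Equiv.trans (Equiv.sigmaFiberEquiv
      (fun x : {p : Perm (Fin (m+1)) // IsForestPerm p} => x.1 0)).symm ?_
    refine Equiv.sigmaCongrRight fun k => ?_
    exact Equiv.subtypeSubtypeEquivSubtypeInter IsForestPerm (fun p : Perm (Fin (m+1)) => p 0 = k)
  rw [Nat.card_congr e, nat_card_sigma]
  exact Finset.sum_congr rfl fun k _ => fiber_card k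
lemma N_succ (m r : ℕ) : N (m + 1) (r + 1) = N m r := by
  rw [N, N]
  have e2 : {q : Perm (Fin m) // IsForestPerm q ∧ ∀ j : Fin m, (j : ℕ) < r → q j = j} ≃
      {x : {p : Perm (Fin (m+1)) // p 0 = 0} //
        IsForestPerm (x : Perm (Fin (m+1))) ∧
          ∀ j : Fin (m+1), (j : ℕ) < r + 1 → (x : Perm (Fin (m+1))) j = j} := by
    refine (insEquiv 0).subtypeEquiv fun q => ?_
    rw [insEquiv_coe]
    constructor
    · rintro ⟨hf, hfix⟩
      refine ⟨forest_insPerm_iff.mpr ⟨hf, by simp⟩, ?_⟩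
      intro j hj
      rcases Fin.eq_zero_or_eq_succ j with rfl | ⟨i, rfl⟩
      · simp
      · have hi : (i : ℕ) < r := by
          have : (i.succ : ℕ) = (i : ℕ) + 1 := rfl
          omega
        rw [insPerm_succ, Fin.zero_succAbove, hfix i hi]
    · rintro ⟨hf, hfix⟩
      refine ⟨(forest_insPerm_iff.mp hf).1, ?_⟩
      intro i hi
      have := hfix i.succ (by simp; omega)
      rw [insPerm_succ, Fin.zero_succAbove] at this
      exact Fin.succ_injective m this
  have e3 : {x : {p : Perm (Fin (m+1)) // p 0 = 0} //
        IsForestPerm (x : Perm (Fin (m+1))) ∧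
          ∀ j : Fin (m+1), (j : ℕ) < r + 1 → (x : Perm (Fin (m+1))) j = j} ≃
      {p : Perm (Fin (m+1)) // p 0 = 0 ∧
        (IsForestPerm p ∧ ∀ j : Fin (m+1), (j : ℕ) < r + 1 → p j = j)} :=
    Equiv.subtypeSubtypeEquivSubtypeInter (fun p : Perm (Fin (m+1)) => p 0 = 0)
      (fun p => IsForestPerm p ∧ ∀ j : Fin (m+1), (j : ℕ) < r + 1 → p j = j)
  have e4 : {p : Perm (Fin (m+1)) // p 0 = 0 ∧
        (IsForestPerm p ∧ ∀ j : Fin (m+1), (j : ℕ) < r + 1 → p j = j)} ≃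
      {p : Perm (Fin (m+1)) // IsForestPerm p ∧ ∀ j : Fin (m+1), (j : ℕ) < r + 1 → p j = j} :=
    Equiv.subtypeEquivRight (fun p => by
      constructor
      · rintro ⟨-, h⟩; exact h
      · intro h; exact ⟨h.2 0 (by simp), h⟩)
  exact (Nat.card_congr (e2.trans (e3.trans e4))).symm

lemma N_eq : ∀ r m, r ≤ m → N m r = numForestPerms (m - r) := by
  intro r
  induction r with
  | zero => intro m _; simpa using N_zero m
  | succ r ih =>
    intro m hr
    obtain ⟨m', rfl⟩ : ∃ m', m = m' + 1 := ⟨m - 1, by omega⟩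
    rw [N_succ, ih m' (by omega)]
    congr 1
    omega

lemma main_sum (m : ℕ) :
    numForestPerms (m + 1) = ∑ k : Fin (m + 1), numForestPerms (m - ((k : ℕ) - 1)) := by
  rw [card_sum]
  exact Finset.sum_congr rfl fun k _ => N_eq _ _ (by omega)
lemma forest_of_le_one {n : ℕ} (h : n ≤ 1) (π : Perm (Fin n)) : IsForestPerm π := by
  intro v c hc
  apply hc.ne_bot
  ext i j
  simp only [SimpleGraph.bot_adj, iff_false]
  rintro (⟨hlt, -⟩ | ⟨hlt, -⟩) <;> (rw [Fin.lt_def] at hlt; omega)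

lemma base_card {n : ℕ} (h : n ≤ 1) : numForestPerms n = 1 := by
  rw [numForestPerms_eq_card,
    Nat.card_congr (Equiv.subtypeUnivEquiv (forest_of_le_one h)),
    Nat.card_eq_fintype_card]
  interval_cases n <;> simp

noncomputable def G (m : ℕ) : ℕ := ∑ j ∈ Finset.range m, numForestPerms (m - j)

lemma step1 (m : ℕ) : numForestPerms (m + 1) = numForestPerms m + G m := by
  rw [main_sum, Fin.sum_univ_eq_sum_range (fun k => numForestPerms (m - (k - 1))),
    Finset.sum_range_succ']
  simp only [Nat.add_sub_cancel, Nat.zero_sub, Nat.sub_zero]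
  rw [add_comm, G]

lemma step2 (m : ℕ) : G (m + 1) = numForestPerms (m + 1) + G m := by
  rw [G, Finset.sum_range_succ']
  simp only [Nat.add_sub_cancel, Nat.sub_zero]
  rw [add_comm, G]
  congr 1
  exact Finset.sum_congr rfl fun j _ => by congr 1; omega

end main
end FPaux

/-- With `f 0 = 1`, the numbers of forest permutations satisfy `f 1 = 1` and the recursion
`f n = 3 f (n-1) - f (n-2)` for all `n ≥ 2`. -/
theorem numForestPerms_recursion :
    numForestPerms 0 = 1 ∧ numForestPerms 1 = 1 ∧
    ∀ n : ℕ, 2 ≤ n →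
      (numForestPerms n : ℤ) = 3 * numForestPerms (n - 1) - numForestPerms (n - 2) := by
  refine ⟨FPaux.base_card (by norm_num), FPaux.base_card le_rfl, ?_⟩
  intro n hn
  obtain ⟨m, rfl⟩ : ∃ m, n = m + 2 := ⟨n - 2, by omega⟩
  have e1 : m + 2 - 1 = m + 1 := by omega
  have e2 : m + 2 - 2 = m := by omega
  rw [e1, e2]
  have h1 := FPaux.step1 m
  have h2 := FPaux.step1 (m + 1)
  have h3 := FPaux.step2 m
  have c1 : (numForestPerms (m+1) : ℤ) = numForestPerms m + FPaux.G m := by exact_mod_cast h1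
  have c2 : (numForestPerms (m+2) : ℤ) = numForestPerms (m+1) + FPaux.G (m+1) := by exact_mod_cast h2
  have c3 : (FPaux.G (m+1) : ℤ) = numForestPerms (m+1) + FPaux.G m := by exact_mod_cast h3
  linarith
end

section
/- Let (Y_i)_{i≥1} be independent, identically distributed random variables taking values in the positive integers with E Y_1 < ∞. Let S_m = Σ_{i=1}^m Y_i, let N(n) = min{m ≥ 1 : S_m ≥ n}, and set Y_i := 0 for i ≤ 0. Then for all integers j ≥ 0, k ≥ 1 and n ≥ 1, P(Y_{N(n)−j} = k) ≤ (k + j·E Y_1)·P(Y_1 = k). Consequently, for every q > 0, E[Y_{N(n)−j}^q] ≤ E[Y_1^{q+1}] + j·(E Y_1)·E[Y_1^q]. -/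
open MeasureTheory ProbabilityTheory
open scoped ENNReal

set_option linter.unusedSectionVars false
namespace RenewalAux

variable {Ω : Type*} [MeasurableSpace Ω]

/-- partial sum of the first `m` variables of the family `f`. -/
def PS (f : ℕ → Ω → ℕ) (m : ℕ) (ω : Ω) : ℕ := ∑ l ∈ Finset.range m, f l ω

/-- sum of the `j` variables following index `i`. -/
def PT (f : ℕ → Ω → ℕ) (i j : ℕ) (ω : Ω) : ℕ := ∑ l ∈ Finset.Ico (i + 1) (i + 1 + j), f l ω

lemma measurable_PS {f : ℕ → Ω → ℕ} (hf : ∀ i, Measurable (f i)) (m : ℕ) :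
    Measurable (PS f m) :=
  Finset.measurable_sum _ fun i _ => hf i

lemma measurable_PT {f : ℕ → Ω → ℕ} (hf : ∀ i, Measurable (f i)) (i j : ℕ) :
    Measurable (PT f i j) :=
  Finset.measurable_sum _ fun l _ => hf l

lemma PS_split (f : ℕ → Ω → ℕ) (i j : ℕ) (ω : Ω) :
    PS f (i + 1 + j) ω = PS f i ω + f i ω + PT f i j ω := by
  unfold PS PT
  rw [Finset.range_eq_Ico,
    ← Finset.sum_Ico_consecutive (fun l => f l ω) (Nat.zero_le (i+1)) (Nat.le_add_right (i+1) j),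
    ← Finset.sum_Ico_consecutive (fun l => f l ω) (Nat.zero_le i) (Nat.le_succ i),
    Nat.Ico_succ_singleton, Finset.sum_singleton, ← Finset.range_eq_Ico]

/-- generic independence-of-composites lemma -/
lemma indep_comp (μ : Measure Ω) [IsProbabilityMeasure μ] (f : ℕ → Ω → ℕ)
    (hf : ∀ i, Measurable (f i))
    (hind : iIndepFun f μ)
    {S T : Finset ℕ} (hd : Disjoint S T)
    {β γ : Type*} [MeasurableSpace β] [MeasurableSpace γ]
    {φ : (↥S → ℕ) → β} {ψ : (↥T → ℕ) → γ}
    (hφ : Measurable φ) (hψ : Measurable ψ)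
    {g : Ω → β} {h : Ω → γ}
    (hg : ∀ ω, φ (fun x => f x ω) = g ω) (hh : ∀ ω, ψ (fun x => f x ω) = h ω) :
    IndepFun g h μ := by
  have H := (hind.indepFun_finset S T hd hf).comp hφ hψ
  have e1 : (φ ∘ fun ω (x : ↥S) => f x ω) = g := funext hg
  have e2 : (ψ ∘ fun ω (x : ↥T) => f x ω) = h := funext hh
  rwa [e1, e2] at H


section Indep

variable (μ : Measure Ω) [IsProbabilityMeasure μ] (f : ℕ → Ω → ℕ)
  (hf : ∀ i, Measurable (f i)) (hind : iIndepFun f μ)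

include hf hind in
lemma indepB (i j : ℕ) : IndepFun (PS f i) (PT f i j) μ := by
  refine indep_comp μ f hf hind (S := Finset.range i) (T := Finset.Ico (i+1) (i+1+j))
    (by simp [Finset.disjoint_left, Finset.mem_range, Finset.mem_Ico]; omega)
    (φ := fun v => ∑ x ∈ (Finset.range i).attach, v x)
    (ψ := fun v => ∑ x ∈ (Finset.Ico (i+1) (i+1+j)).attach, v x)
    (Finset.measurable_sum _ fun x _ => measurable_pi_apply x)
    (Finset.measurable_sum _ fun x _ => measurable_pi_apply x)
    (fun ω => ?_) (fun ω => ?_)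
  · exact Finset.sum_attach _ (fun l => f l ω)
  · exact Finset.sum_attach _ (fun l => f l ω)

include hf hind in
lemma indepC (i j : ℕ) : IndepFun (PT f i j) (f (i + 1 + j)) μ := by
  refine indep_comp μ f hf hind (S := Finset.Ico (i+1) (i+1+j)) (T := {i+1+j})
    (by simp [Finset.disjoint_left, Finset.mem_Ico]; omega)
    (φ := fun v => ∑ x ∈ (Finset.Ico (i+1) (i+1+j)).attach, v x)
    (ψ := fun v => v ⟨i+1+j, Finset.mem_singleton_self _⟩)
    (Finset.measurable_sum _ fun x _ => measurable_pi_apply x)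
    (measurable_pi_apply _)
    (fun ω => ?_) (fun ω => rfl)
  exact Finset.sum_attach _ (fun l => f l ω)

include hf hind in
lemma indepA (i j : ℕ) :
    IndepFun (f i) (fun ω => (PS f i ω, PT f i j ω)) μ := by
  classical
  set T : Finset ℕ := Finset.range i ∪ Finset.Ico (i+1) (i+1+j) with hT
  have h1 : T.filter (fun l => l ∈ Finset.range i) = Finset.range i := by
    ext l; simp [hT, Finset.mem_filter, Finset.mem_union]; omega
  have h2 : T.filter (fun l => l ∈ Finset.Ico (i+1) (i+1+j)) = Finset.Ico (i+1) (i+1+j) := by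
    ext l; simp [hT, Finset.mem_filter, Finset.mem_union]; omega
  refine indep_comp μ f hf hind (S := {i}) (T := T)
    (by simp only [hT, Finset.disjoint_left, Finset.mem_union, Finset.mem_range, Finset.mem_Ico, Finset.mem_singleton]; omega)
    (φ := fun v => v ⟨i, Finset.mem_singleton_self _⟩)
    (ψ := fun v => (∑ x ∈ T.attach, if (x : ℕ) ∈ Finset.range i then v x else 0,
      ∑ x ∈ T.attach, if (x : ℕ) ∈ Finset.Ico (i+1) (i+1+j) then v x else 0))
    (measurable_pi_apply _)
    (Measurable.prodMk
      (Finset.measurable_sum _ fun x _ => by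
        split_ifs
        · exact measurable_pi_apply x
        · exact measurable_const)
      (Finset.measurable_sum _ fun x _ => by
        split_ifs
        · exact measurable_pi_apply x
        · exact measurable_const))
    (fun ω => rfl) (fun ω => ?_)
  have e1 : ∑ x ∈ T.attach, (if (x : ℕ) ∈ Finset.range i then f x ω else 0)
      = PS f i ω := by
    rw [Finset.sum_attach T (fun l => if l ∈ Finset.range i then f l ω else 0),
      ← Finset.sum_filter, h1]; rfl
  have e2 : ∑ x ∈ T.attach, (if (x : ℕ) ∈ Finset.Ico (i+1) (i+1+j) then f x ω else 0)
      = PT f i j ω := by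
    rw [Finset.sum_attach T (fun l => if l ∈ Finset.Ico (i+1) (i+1+j) then f l ω else 0),
      ← Finset.sum_filter, h2]; rfl
  exact Prod.ext e1 e2

end Indep

lemma measSet {s : Set ℕ} : MeasurableSet s := MeasurableSpace.measurableSet_top

lemma measEq {g : Ω → ℕ} (hg : Measurable g) (c : ℕ) : MeasurableSet {ω | g ω = c} :=
  hg (measSet (s := {c}))

lemma measLe {g : Ω → ℕ} (hg : Measurable g) (c : ℕ) : MeasurableSet {ω | c ≤ g ω} :=
  hg (measSet (s := {x | c ≤ x}))

section Ident

variable (μ : Measure Ω) [IsProbabilityMeasure μ] (f : ℕ → Ω → ℕ)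
  (hf : ∀ i, Measurable (f i)) (hind : iIndepFun f μ)
  (hid : ∀ l b, μ {ω | f l ω = b} = μ {ω | f 0 ω = b})

include hf hind hid in
lemma pmf_PT : ∀ j i t, μ {ω | PT f i j ω = t} = μ {ω | PT f 0 j ω = t} := by
  intro j
  induction j with
  | zero => intro i t; simp [PT]
  | succ j ih =>
    have step : ∀ i t, μ {ω | PT f i (j+1) ω = t}
        = ∑ b ∈ Finset.range (t+1), μ {ω | PT f i j ω = t - b} * μ {ω | f (i+1+j) ω = b} := by
      intro i t
      have hsum : ∀ ω, PT f i (j+1) ω = PT f i j ω + f (i+1+j) ω := by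
        intro ω
        unfold PT
        have h : i + 1 + (j+1) = (i+1+j) + 1 := by omega
        rw [h, Finset.sum_Ico_succ_top (by omega)]
      have hset : {ω | PT f i (j+1) ω = t}
          = ⋃ b ∈ Finset.range (t+1), ({ω | PT f i j ω = t - b} ∩ {ω | f (i+1+j) ω = b}) := by
        ext ω
        simp only [Set.mem_setOf_eq, Set.mem_iUnion, Set.mem_inter_iff, Finset.mem_range,
          hsum ω, exists_prop]
        constructor
        · intro h; exact ⟨f (i+1+j) ω, by omega, by omega, rfl⟩
        · rintro ⟨b, hb, h1, h2⟩; omega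
      have hd : (↑(Finset.range (t+1)) : Set ℕ).PairwiseDisjoint
          (fun b => {ω | PT f i j ω = t - b} ∩ {ω | f (i+1+j) ω = b}) := by
        intro b hb b' hb' hne
        refine Set.disjoint_left.mpr fun ω h1 h2 => hne ?_
        exact h1.2.symm.trans h2.2
      rw [hset, measure_biUnion_finset hd
        (fun b _ => (measEq (measurable_PT hf i j) _).inter (measEq (hf _) _))]
      refine Finset.sum_congr rfl fun b hb => ?_
      exact (indepC μ f hf hind i j).measure_inter_preimage_eq_mul
        (s := {t-b}) (t := {b}) measSet measSet
    intro i t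
    rw [step i t, step 0 t]
    refine Finset.sum_congr rfl fun b hb => ?_
    rw [ih i, hid (i+1+j) b, hid (0+1+j) b]

include hf hind hid in
lemma tail_PT (u i j : ℕ) : μ {ω | u ≤ PT f i j ω} = μ {ω | u ≤ PT f 0 j ω} := by
  have hdec : ∀ i', {ω | u ≤ PT f i' j ω} = ⋃ t : ℕ, {ω | PT f i' j ω = u + t} := by
    intro i'
    ext ω
    simp only [Set.mem_setOf_eq, Set.mem_iUnion]
    constructor
    · intro h; exact ⟨PT f i' j ω - u, by omega⟩
    · rintro ⟨t, ht⟩; omega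
  have hdisj : ∀ i', Pairwise (Function.onFun Disjoint (fun t => {ω | PT f i' j ω = u + t})) := by
    intro i' t t' hne
    refine Set.disjoint_left.mpr fun ω h1 h2 => hne ?_
    simp only [Set.mem_setOf_eq] at h1 h2
    omega
  rw [hdec i, hdec 0, measure_iUnion (hdisj i) (fun t => measEq (measurable_PT hf i j) _),
    measure_iUnion (hdisj 0) (fun t => measEq (measurable_PT hf 0 j) _)]
  exact tsum_congr fun t => pmf_PT μ f hf hind hid j i (u + t)

end Ident


section Sums

variable (μ : Measure Ω) [IsProbabilityMeasure μ]

lemma lintegral_comp_nat (g : Ω → ℕ) (hg : Measurable g) (F : ℕ → ℝ≥0∞) :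
    ∫⁻ ω, F (g ω) ∂μ = ∑' b : ℕ, F b * μ {ω | g ω = b} := by
  rw [← lintegral_map measurable_from_top hg, lintegral_countable']
  exact tsum_congr fun b => by
    rw [Measure.map_apply hg (measurableSet_singleton b)]; rfl

lemma sum_tail_le (g : Ω → ℕ) (hg : Measurable g) (m : ℕ) :
    ∑ x ∈ Finset.range m, μ {ω | x + 1 ≤ g ω} ≤ ∫⁻ ω, (g ω : ℝ≥0∞) ∂μ := by
  have h1 : ∀ x : ℕ, μ {ω | x + 1 ≤ g ω}
      = ∫⁻ ω, ({ω | x + 1 ≤ g ω}.indicator (fun _ => (1 : ℝ≥0∞))) ω ∂μ :=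
    fun x => (lintegral_indicator_one (measLe hg _)).symm
  calc ∑ x ∈ Finset.range m, μ {ω | x + 1 ≤ g ω}
      = ∫⁻ ω, ∑ x ∈ Finset.range m,
          ({ω | x + 1 ≤ g ω}.indicator (fun _ => (1 : ℝ≥0∞))) ω ∂μ := by
        rw [lintegral_finset_sum']
        · exact Finset.sum_congr rfl fun x _ => h1 x
        · exact fun x _ => (measurable_const.indicator (measLe hg (x+1))).aemeasurable
    _ ≤ ∫⁻ ω, (g ω : ℝ≥0∞) ∂μ := by
        refine lintegral_mono fun ω => ?_
        have e : ∀ x : ℕ, ({ω | x + 1 ≤ g ω}.indicator (fun _ => (1 : ℝ≥0∞))) ω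
            = if x + 1 ≤ g ω then (1 : ℝ≥0∞) else 0 := fun x => Set.indicator_apply _ _ _
        simp only [e]
        have e2 : ∀ x : ℕ, (if x + 1 ≤ g ω then (1 : ℝ≥0∞) else 0)
            = if x ∈ Finset.range (g ω) then (1 : ℝ≥0∞) else 0 := by
          intro x; simp only [Finset.mem_range]; rfl
        simp only [e2]
        rw [← Finset.sum_filter, Finset.filter_mem_eq_inter]
        calc ∑ _x ∈ Finset.range m ∩ Finset.range (g ω), (1 : ℝ≥0∞)
            = ((Finset.range m ∩ Finset.range (g ω)).card : ℝ≥0∞) := by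
              rw [Finset.sum_const, nsmul_eq_mul, mul_one]
          _ ≤ (g ω : ℝ≥0∞) := by
              have : (Finset.range m ∩ Finset.range (g ω)).card ≤ g ω := by
                calc (Finset.range m ∩ Finset.range (g ω)).card
                    ≤ (Finset.range (g ω)).card :=
                      Finset.card_le_card (Finset.inter_subset_right)
                  _ = g ω := Finset.card_range _
              exact_mod_cast this

lemma lintegral_PT (f : ℕ → Ω → ℕ) (hf : ∀ i, Measurable (f i))
    (E : ℝ≥0∞) (hfl : ∀ l, ∫⁻ ω, (f l ω : ℝ≥0∞) ∂μ = E) (j : ℕ) :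
    ∫⁻ ω, (PT f 0 j ω : ℝ≥0∞) ∂μ = (j : ℝ≥0∞) * E := by
  have e : ∀ ω, ((PT f 0 j ω : ℝ≥0∞)) = ∑ l ∈ Finset.Ico 1 (1 + j), ((f l ω : ℝ≥0∞)) := by
    intro ω; unfold PT; push_cast; ring_nf
  calc ∫⁻ ω, (PT f 0 j ω : ℝ≥0∞) ∂μ
      = ∑ l ∈ Finset.Ico 1 (1 + j), ∫⁻ ω, (f l ω : ℝ≥0∞) ∂μ := by
        rw [← lintegral_finset_sum']
        · exact lintegral_congr e
        · exact fun l _ => (measurable_from_top.comp (hf l) : Measurable fun ω => ((f l ω : ℝ≥0∞))).aemeasurable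
    _ = (j : ℝ≥0∞) * E := by
        rw [Finset.sum_congr rfl fun l _ => hfl l, Finset.sum_const, Nat.card_Ico,
          nsmul_eq_mul]
        have h : 1 + j - 1 = j := by omega
        rw [h]

end Sums


section Key

variable (μ : Measure Ω) [IsProbabilityMeasure μ] (f : ℕ → Ω → ℕ)
  (hf : ∀ i, Measurable (f i)) (hind : iIndepFun f μ)
  (hid : ∀ l b, μ {ω | f l ω = b} = μ {ω | f 0 ω = b})
  (hpos : ∀ i ω, 1 ≤ f i ω)

lemma PS_succ (i : ℕ) (ω : Ω) : PS f (i + 1) ω = PS f i ω + f i ω :=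
  Finset.sum_range_succ _ _

include hpos in
lemma PS_strictMono (ω : Ω) : StrictMono (fun i => PS f i ω) :=
  strictMono_nat_of_lt_succ fun i => by
    have := hpos i ω; rw [PS_succ]; omega

lemma PS_mono (ω : Ω) : Monotone (fun i => PS f i ω) := fun i i' h =>
  Finset.sum_le_sum_of_subset (Finset.range_subset_range.mpr h)

include hf hind hid hpos in
lemma key (N : ℕ → Ω → ℕ) (j k n : ℕ) (hk : 1 ≤ k) (hn : 1 ≤ n)
    (hNm : ∀ ω m, 1 ≤ m → N n ω = m → PS f (m - 1) ω < n ∧ n ≤ PS f m ω)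
    (hNmeas : ∀ m, MeasurableSet {ω | N n ω = m}) :
    μ (⋃ i : ℕ, ({ω | N n ω = i + 1 + j} ∩ {ω | f i ω = k}))
      ≤ ((k : ℝ≥0∞) + (j : ℝ≥0∞) * ∫⁻ ω, (f 0 ω : ℝ≥0∞) ∂μ) * μ {ω | f 0 ω = k} := by
  classical
  set E : ℝ≥0∞ := ∫⁻ ω, (f 0 ω : ℝ≥0∞) ∂μ with hE
  set G : ℕ → ℝ≥0∞ := fun u => μ {ω | u ≤ PT f 0 j ω} with hG
  set A : ℕ → Set Ω := fun i => {ω | N n ω = i + 1 + j} ∩ {ω | f i ω = k} with hA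
  set C : ℕ → Set Ω := fun i => {ω | PS f i ω < n ∧ n ≤ PS f i ω + k + PT f i j ω} with hC
  -- step 1 : σ-additivity
  have hAmeas : ∀ i, MeasurableSet (A i) := fun i => (hNmeas _).inter (measEq (hf i) k)
  have hAdisj : Pairwise (Function.onFun Disjoint A) := by
    intro i i' hne
    refine Set.disjoint_left.mpr fun ω h1 h2 => hne ?_
    have := h1.1.symm.trans h2.1
    omega
  have step1 : μ (⋃ i, A i) = ∑' i, μ (A i) := measure_iUnion hAdisj hAmeas
  -- step 3 : independence bound for each i
  have step3 : ∀ i, μ (A i) ≤ μ {ω | f 0 ω = k} * μ (C i) := by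
    intro i
    have hsub : A i ⊆ {ω | f i ω = k} ∩ C i := by
      rintro ω ⟨h1, h2⟩
      simp only [Set.mem_setOf_eq] at h1 h2
      have hm := hNm ω (i + 1 + j) (by omega) h1
      have hij : i + 1 + j - 1 = i + j := by omega
      rw [hij] at hm
      have hmono : PS f i ω ≤ PS f (i + j) ω := PS_mono f ω (by omega)
      have hsplit := PS_split f i j ω
      refine ⟨h2, ?_, ?_⟩
      · omega
      · rw [← h2]; omega
    have hprod : μ ({ω | f i ω = k} ∩ C i) = μ {ω | f i ω = k} * μ (C i) := by
      have hD : MeasurableSet {p : ℕ × ℕ | p.1 < n ∧ n ≤ p.1 + k + p.2} :=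
        (Set.to_countable _).measurableSet
      have := (indepA μ f hf hind i j).measure_inter_preimage_eq_mul
        (s := {k}) (t := {p : ℕ × ℕ | p.1 < n ∧ n ≤ p.1 + k + p.2}) measSet hD
      exact this
    calc μ (A i) ≤ μ ({ω | f i ω = k} ∩ C i) := measure_mono hsub
      _ = μ {ω | f i ω = k} * μ (C i) := hprod
      _ = μ {ω | f 0 ω = k} * μ (C i) := by rw [hid i k]
  -- step 4 : decomposition of C i
  have step4 : ∀ i, μ (C i) = ∑ s ∈ Finset.range n, μ {ω | PS f i ω = s} * G (n - (k + s)) := by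
    intro i
    have hset : C i = ⋃ s ∈ Finset.range n,
        ({ω | PS f i ω = s} ∩ {ω | n ≤ s + k + PT f i j ω}) := by
      ext ω
      simp only [hC, Set.mem_setOf_eq, Set.mem_iUnion, Set.mem_inter_iff, Finset.mem_range,
        exists_prop]
      constructor
      · intro h; exact ⟨PS f i ω, h.1, rfl, by omega⟩
      · rintro ⟨s, hs, h1, h2⟩; constructor <;> omega
    have hd : (↑(Finset.range n) : Set ℕ).PairwiseDisjoint
        (fun s => {ω | PS f i ω = s} ∩ {ω | n ≤ s + k + PT f i j ω}) := by
      intro s hs s' hs' hne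
      refine Set.disjoint_left.mpr fun ω h1 h2 => hne ?_
      exact h1.1.symm.trans h2.1
    rw [hset, measure_biUnion_finset hd (fun s _ =>
      (measEq (measurable_PS hf i) s).inter ((measurable_PT hf i j)
        (measSet (s := {t | n ≤ s + k + t}))))]
    refine Finset.sum_congr rfl fun s hs => ?_
    have hprod := (indepB μ f hf hind i j).measure_inter_preimage_eq_mul
      (s := {s}) (t := {t | n ≤ s + k + t}) measSet measSet
    rw [show ({ω | PS f i ω = s} ∩ {ω | n ≤ s + k + PT f i j ω})
      = (PS f i ⁻¹' {s} ∩ PT f i j ⁻¹' {t | n ≤ s + k + t}) from rfl, hprod]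
    congr 1
    have : {ω | n ≤ s + k + PT f i j ω} = {ω | n - (k + s) ≤ PT f i j ω} := by
      ext ω; simp only [Set.mem_setOf_eq]; omega
    calc μ (PT f i j ⁻¹' {t | n ≤ s + k + t}) = μ {ω | n - (k + s) ≤ PT f i j ω} := by
          rw [show (PT f i j ⁻¹' {t | n ≤ s + k + t}) = {ω | n ≤ s + k + PT f i j ω} from rfl,
            this]
      _ = G (n - (k + s)) := tail_PT μ f hf hind hid (n - (k + s)) i j
  -- step 6 : the occupation bound
  have step6 : ∀ s, ∑' i, μ {ω | PS f i ω = s} ≤ 1 := by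
    intro s
    have hdisj : Pairwise (Function.onFun Disjoint (fun i => {ω | PS f i ω = s})) := by
      intro i i' hne
      refine Set.disjoint_left.mpr fun ω h1 h2 => hne ?_
      exact (PS_strictMono f hpos ω).injective (h1.trans h2.symm)
    rw [← measure_iUnion hdisj (fun i => measEq (measurable_PS hf i) s)]
    exact prob_le_one
  -- step 7 : the tail sum bound
  have step7 : ∑ s ∈ Finset.range n, G (n - (k + s)) ≤ (k : ℝ≥0∞) + (j : ℝ≥0∞) * E := by
    rw [← Finset.sum_filter_add_sum_filter_not (Finset.range n) (fun s => s + k < n)]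
    have hG1 : ∀ u, G u ≤ 1 := fun u => prob_le_one
    have hfilter1 : (Finset.range n).filter (fun s => s + k < n) = Finset.range (n - k) := by
      ext s; simp only [Finset.mem_filter, Finset.mem_range]; omega
    have hfilter2 : (Finset.range n).filter (fun s => ¬ s + k < n) = Finset.Ico (n - k) n := by
      ext s; simp only [Finset.mem_filter, Finset.mem_range, Finset.mem_Ico]; omega
    have hb2 : ∑ s ∈ (Finset.range n).filter (fun s => ¬ s + k < n), G (n - (k + s))
        ≤ (k : ℝ≥0∞) := by
      calc ∑ s ∈ (Finset.range n).filter (fun s => ¬ s + k < n), G (n - (k + s))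
          ≤ ∑ _s ∈ (Finset.range n).filter (fun s => ¬ s + k < n), (1 : ℝ≥0∞) :=
            Finset.sum_le_sum fun s _ => hG1 _
        _ = (((Finset.range n).filter (fun s => ¬ s + k < n)).card : ℝ≥0∞) := by
            rw [Finset.sum_const, nsmul_eq_mul, mul_one]
        _ ≤ (k : ℝ≥0∞) := by
            rw [hfilter2, Nat.card_Ico]
            exact_mod_cast Nat.le_of_lt_succ (by omega)
    have hb1 : ∑ s ∈ (Finset.range n).filter (fun s => s + k < n), G (n - (k + s))
        ≤ (j : ℝ≥0∞) * E := by
      rw [hfilter1]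
      set m := n - k with hm
      have hcongr : ∀ s ∈ Finset.range m, G (n - (k + s)) = G ((m - 1 - s) + 1) := by
        intro s hs
        simp only [Finset.mem_range] at hs
        congr 1
        omega
      rw [Finset.sum_congr rfl hcongr, Finset.sum_range_reflect (fun x => G (x + 1)) m]
      calc ∑ x ∈ Finset.range m, G (x + 1)
          ≤ ∫⁻ ω, (PT f 0 j ω : ℝ≥0∞) ∂μ :=
            sum_tail_le μ (PT f 0 j) (measurable_PT hf 0 j) m
        _ = (j : ℝ≥0∞) * E := by
            refine lintegral_PT μ f hf E (fun l => ?_) j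
            rw [lintegral_comp_nat μ (f l) (hf l) (fun b => (b : ℝ≥0∞)), hE,
              lintegral_comp_nat μ (f 0) (hf 0) (fun b => (b : ℝ≥0∞))]
            exact tsum_congr fun b => by rw [hid l b]
    exact (add_le_add hb1 hb2).trans_eq (add_comm _ _)
  -- assemble
  calc μ (⋃ i, A i) = ∑' i, μ (A i) := step1
    _ ≤ ∑' i, μ {ω | f 0 ω = k} * μ (C i) := ENNReal.tsum_le_tsum step3
    _ = μ {ω | f 0 ω = k} * ∑' i, μ (C i) := ENNReal.tsum_mul_left
    _ ≤ μ {ω | f 0 ω = k} * ((k : ℝ≥0∞) + (j : ℝ≥0∞) * E) := by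
        refine mul_le_mul_right ?_ _
        calc ∑' i, μ (C i)
            = ∑' i, ∑ s ∈ Finset.range n, μ {ω | PS f i ω = s} * G (n - (k + s)) :=
              tsum_congr step4
          _ = ∑ s ∈ Finset.range n, ∑' i, μ {ω | PS f i ω = s} * G (n - (k + s)) :=
              Summable.tsum_finsetSum fun _ _ => ENNReal.summable
          _ = ∑ s ∈ Finset.range n, (∑' i, μ {ω | PS f i ω = s}) * G (n - (k + s)) :=
              Finset.sum_congr rfl fun s _ => ENNReal.tsum_mul_right
          _ ≤ ∑ s ∈ Finset.range n, G (n - (k + s)) := by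
              refine Finset.sum_le_sum fun s _ => ?_
              calc (∑' i, μ {ω | PS f i ω = s}) * G (n - (k + s))
                  ≤ 1 * G (n - (k + s)) := mul_le_mul_left (step6 s) _
                _ = G (n - (k + s)) := one_mul _
          _ ≤ (k : ℝ≥0∞) + (j : ℝ≥0∞) * E := step7
    _ = ((k : ℝ≥0∞) + (j : ℝ≥0∞) * E) * μ {ω | f 0 ω = k} := mul_comm _ _

end Key

end RenewalAux

open RenewalAux

/-- Let `(Y_i)_{i≥1}` be i.i.d. positive-integer-valued random variables with finite mean,
with the convention `Y_0 = 0`.  Let `S_m = Σ_{i=1}^m Y_i` and let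
`N(n) = min{m ≥ 1 : S_m ≥ n}` be the first-passage time.  Then for all `j ≥ 0`, `k ≥ 1` and
`n ≥ 1`, `P(Y_{N(n)−j} = k) ≤ (k + j·E Y_1)·P(Y_1 = k)`, and consequently, for every real
`q > 0`, `E[Y_{N(n)−j}^q] ≤ E[Y_1^{q+1}] + j·(E Y_1)·E[Y_1^q]`. -/
theorem renewal_window_bound {Ω : Type*} [MeasurableSpace Ω]
    (μ : Measure Ω) [IsProbabilityMeasure μ]
    (Y : ℕ → Ω → ℕ)
    (hY0 : ∀ ω, Y 0 ω = 0)
    (hmeas : ∀ i, Measurable (Y i))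
    (hpos : ∀ i, 1 ≤ i → ∀ ω, 1 ≤ Y i ω)
    (hindep : iIndepFun (fun i : ℕ => Y (i + 1)) μ)
    (hident : ∀ i, 1 ≤ i → Measure.map (Y i) μ = Measure.map (Y 1) μ)
    (hmean : (∫⁻ ω, (Y 1 ω : ℝ≥0∞) ∂μ) < ⊤) :
    let S : ℕ → Ω → ℕ := fun m ω => ∑ i ∈ Finset.Icc 1 m, Y i ω
    let N : ℕ → Ω → ℕ := fun n ω => sInf {m | 1 ≤ m ∧ n ≤ S m ω}
    (∀ j k n : ℕ, 1 ≤ k → 1 ≤ n →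
      μ {ω | Y (N n ω - j) ω = k} ≤
        ((k : ℝ≥0∞) + (j : ℝ≥0∞) * ∫⁻ ω, (Y 1 ω : ℝ≥0∞) ∂μ) * μ {ω | Y 1 ω = k}) ∧
    (∀ (q : ℝ), 0 < q → ∀ j n : ℕ, 1 ≤ n →
      (∫⁻ ω, (Y (N n ω - j) ω : ℝ≥0∞) ^ q ∂μ) ≤
        (∫⁻ ω, (Y 1 ω : ℝ≥0∞) ^ (q + 1) ∂μ) +
          (j : ℝ≥0∞) * (∫⁻ ω, (Y 1 ω : ℝ≥0∞) ∂μ) * ∫⁻ ω, (Y 1 ω : ℝ≥0∞) ^ q ∂μ) := by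
  intro S N
  classical
  set f : ℕ → Ω → ℕ := fun l => Y (l + 1) with hfdef
  have hf : ∀ i, Measurable (f i) := fun i => hmeas (i + 1)
  have hind' : iIndepFun f μ := hindep
  have hposf : ∀ i ω, 1 ≤ f i ω := fun i ω => hpos (i + 1) (by omega) ω
  have hpmfY : ∀ l, 1 ≤ l → ∀ b, μ {ω | Y l ω = b} = μ {ω | Y 1 ω = b} := by
    intro l hl b
    have h1 : μ {ω | Y l ω = b} = (Measure.map (Y l) μ) {b} := by
      rw [Measure.map_apply (hmeas l) (measurableSet_singleton b)]; rfl
    have h2 : μ {ω | Y 1 ω = b} = (Measure.map (Y 1) μ) {b} := by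
      rw [Measure.map_apply (hmeas 1) (measurableSet_singleton b)]; rfl
    rw [h1, h2, hident l hl]
  have hid : ∀ l b, μ {ω | f l ω = b} = μ {ω | f 0 ω = b} := by
    intro l b
    show μ {ω | Y (l + 1) ω = b} = μ {ω | Y (0 + 1) ω = b}
    rw [hpmfY (l + 1) (by omega) b]
  have hSPS : ∀ m ω, S m ω = PS f m ω := by
    intro m ω
    show ∑ i ∈ Finset.Icc 1 m, Y i ω = ∑ l ∈ Finset.range m, Y (l + 1) ω
    rw [show Finset.Icc 1 m = Finset.Ico 1 (m + 1) from (Finset.Ico_add_one_right_eq_Icc ..).symm,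
      Finset.sum_Ico_eq_sum_range]
    simp only [Nat.add_sub_cancel]
    exact Finset.sum_congr rfl fun l _ => by rw [Nat.add_comm]
  have hSge : ∀ n ω, n ≤ S n ω := by
    intro n ω
    rw [hSPS]
    calc n = ∑ _l ∈ Finset.range n, 1 := by simp
      _ ≤ ∑ l ∈ Finset.range n, f l ω := Finset.sum_le_sum fun l _ => hposf l ω
  have hNmem : ∀ n ω, 1 ≤ n → 1 ≤ N n ω ∧ n ≤ S (N n ω) ω := by
    intro n ω hn
    have := Nat.sInf_mem (⟨n, hn, hSge n ω⟩ : {m | 1 ≤ m ∧ n ≤ S m ω}.Nonempty)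
    exact this
  have hNiff : ∀ n, 1 ≤ n → ∀ ω m, 1 ≤ m →
      (N n ω = m ↔ PS f (m - 1) ω < n ∧ n ≤ PS f m ω) := by
    intro n hn ω m hm
    constructor
    · intro h
      have hmem := hNmem n ω hn
      rw [h] at hmem
      refine ⟨?_, by rw [← hSPS]; exact hmem.2⟩
      rcases Nat.eq_zero_or_pos (m - 1) with h0 | h1
      · rw [h0]
        show PS f 0 ω < n
        simp only [PS, Finset.range_zero, Finset.sum_empty]
        omega
      · by_contra hcon
        push_neg at hcon
        have hmem' : m - 1 ∈ {m' | 1 ≤ m' ∧ n ≤ S m' ω} := ⟨h1, by rw [hSPS]; exact hcon⟩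
        have hle : N n ω ≤ m - 1 := Nat.sInf_le hmem'
        omega
    · rintro ⟨h1, h2⟩
      have hmem : m ∈ {m' | 1 ≤ m' ∧ n ≤ S m' ω} := ⟨hm, by rw [hSPS]; exact h2⟩
      refine le_antisymm (Nat.sInf_le hmem) ?_
      refine le_csInf ⟨m, hmem⟩ fun b hb => ?_
      by_contra hcon
      push_neg at hcon
      have hble : b ≤ m - 1 := by omega
      have hnb : n ≤ PS f b ω := by rw [← hSPS]; exact hb.2
      have hmono : PS f b ω ≤ PS f (m - 1) ω := PS_mono f ω hble
      omega
  have hNmeas : ∀ n, 1 ≤ n → ∀ m, MeasurableSet {ω | N n ω = m} := by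
    intro n hn m
    rcases Nat.eq_zero_or_pos m with h0 | h1
    · have : {ω | N n ω = m} = ∅ := by
        ext ω
        simp only [Set.mem_setOf_eq, Set.mem_empty_iff_false, iff_false]
        intro h
        have := hNmem n ω hn
        omega
      rw [this]; exact MeasurableSet.empty
    · have : {ω | N n ω = m} = {ω | PS f (m - 1) ω < n} ∩ {ω | n ≤ PS f m ω} := by
        ext ω
        simp only [Set.mem_setOf_eq, Set.mem_inter_iff]
        exact hNiff n hn ω m h1
      rw [this]
      exact ((measurable_PS hf (m - 1)) (measSet (s := {x | x < n}))).inter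
        ((measurable_PS hf m) (measSet (s := {x | n ≤ x})))
  have key1 : ∀ j k n : ℕ, 1 ≤ k → 1 ≤ n →
      μ {ω | Y (N n ω - j) ω = k} ≤
        ((k : ℝ≥0∞) + (j : ℝ≥0∞) * ∫⁻ ω, (Y 1 ω : ℝ≥0∞) ∂μ) * μ {ω | Y 1 ω = k} := by
    intro j k n hk hn
    have hset : {ω | Y (N n ω - j) ω = k}
        = ⋃ i : ℕ, ({ω | N n ω = i + 1 + j} ∩ {ω | f i ω = k}) := by
      ext ω
      simp only [Set.mem_setOf_eq, Set.mem_iUnion, Set.mem_inter_iff]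
      constructor
      · intro h
        have hN1 := (hNmem n ω hn).1
        have hNj : j + 1 ≤ N n ω := by
          by_contra hcon
          push_neg at hcon
          have h0 : N n ω - j = 0 := by omega
          rw [h0, hY0 ω] at h
          omega
        refine ⟨N n ω - j - 1, by omega, ?_⟩
        show Y (N n ω - j - 1 + 1) ω = k
        have : N n ω - j - 1 + 1 = N n ω - j := by omega
        rw [this]; exact h
      · rintro ⟨i, h1, h2⟩
        have : N n ω - j = i + 1 := by omega
        rw [this]; exact h2
    rw [hset]
    have hkey := key μ f hf hind' hid hposf N j k n hk hn
      (fun ω m hm hNm => (hNiff n hn ω m hm).mp hNm) (hNmeas n hn)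
    have hE : (∫⁻ ω, (f 0 ω : ℝ≥0∞) ∂μ) = ∫⁻ ω, (Y 1 ω : ℝ≥0∞) ∂μ := rfl
    have hpk : μ {ω | f 0 ω = k} = μ {ω | Y 1 ω = k} := rfl
    rw [hE, hpk] at hkey
    exact hkey
  refine ⟨key1, ?_⟩
  intro q hq j n hn
  set Z : Ω → ℕ := fun ω => Y (N n ω - j) ω with hZdef
  have hZ : Measurable Z := by
    refine measurable_to_countable' fun k => ?_
    have : Z ⁻¹' {k} = ⋃ m : ℕ, ({ω | N n ω = m} ∩ {ω | Y (m - j) ω = k}) := by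
      ext ω
      simp only [Set.mem_preimage, Set.mem_singleton_iff, Set.mem_iUnion, Set.mem_inter_iff,
        Set.mem_setOf_eq]
      constructor
      · intro h; exact ⟨N n ω, rfl, h⟩
      · rintro ⟨m, h1, h2⟩; rw [hZdef]; show Y (N n ω - j) ω = k; rw [h1]; exact h2
    rw [this]
    exact MeasurableSet.iUnion fun m =>
      (hNmeas n hn m).inter (measEq (hmeas (m - j)) k)
  have h1 : (∫⁻ ω, (Y (N n ω - j) ω : ℝ≥0∞) ^ q ∂μ)
      = ∑' b : ℕ, ((b : ℝ≥0∞)) ^ q * μ {ω | Y (N n ω - j) ω = b} :=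
    lintegral_comp_nat μ Z hZ (fun b => (b : ℝ≥0∞) ^ q)
  have h2 : (∫⁻ ω, (Y 1 ω : ℝ≥0∞) ^ (q + 1) ∂μ)
      = ∑' b : ℕ, ((b : ℝ≥0∞)) ^ (q + 1) * μ {ω | Y 1 ω = b} :=
    lintegral_comp_nat μ (Y 1) (hmeas 1) (fun b => (b : ℝ≥0∞) ^ (q + 1))
  have h3 : (∫⁻ ω, (Y 1 ω : ℝ≥0∞) ^ q ∂μ)
      = ∑' b : ℕ, ((b : ℝ≥0∞)) ^ q * μ {ω | Y 1 ω = b} :=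
    lintegral_comp_nat μ (Y 1) (hmeas 1) (fun b => (b : ℝ≥0∞) ^ q)
  set E : ℝ≥0∞ := ∫⁻ ω, (Y 1 ω : ℝ≥0∞) ∂μ with hEdef
  rw [h1, h2, h3]
  have hterm : ∀ b : ℕ, ((b : ℝ≥0∞)) ^ q * μ {ω | Y (N n ω - j) ω = b}
      ≤ ((b : ℝ≥0∞)) ^ (q + 1) * μ {ω | Y 1 ω = b}
        + ((j : ℝ≥0∞) * E) * (((b : ℝ≥0∞)) ^ q * μ {ω | Y 1 ω = b}) := by
    intro b
    rcases Nat.eq_zero_or_pos b with h0 | h1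
    · subst h0
      simp only [Nat.cast_zero, ENNReal.zero_rpow_of_pos hq, zero_mul]
      exact zero_le
    · have hrpow : ((b : ℝ≥0∞)) ^ (q + 1) = ((b : ℝ≥0∞)) ^ q * (b : ℝ≥0∞) := by
        rw [ENNReal.rpow_add q 1 (Nat.cast_ne_zero.mpr (by omega))
          (ENNReal.natCast_ne_top b), ENNReal.rpow_one]
      calc ((b : ℝ≥0∞)) ^ q * μ {ω | Y (N n ω - j) ω = b}
          ≤ ((b : ℝ≥0∞)) ^ q * (((b : ℝ≥0∞) + (j : ℝ≥0∞) * E) * μ {ω | Y 1 ω = b}) :=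
            mul_le_mul_right (key1 j b n h1 hn) _
        _ = ((b : ℝ≥0∞)) ^ (q + 1) * μ {ω | Y 1 ω = b}
            + ((j : ℝ≥0∞) * E) * (((b : ℝ≥0∞)) ^ q * μ {ω | Y 1 ω = b}) := by
            rw [hrpow]; ring
  calc ∑' b : ℕ, ((b : ℝ≥0∞)) ^ q * μ {ω | Y (N n ω - j) ω = b}
      ≤ ∑' b : ℕ, (((b : ℝ≥0∞)) ^ (q + 1) * μ {ω | Y 1 ω = b}
          + ((j : ℝ≥0∞) * E) * (((b : ℝ≥0∞)) ^ q * μ {ω | Y 1 ω = b})) :=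
        ENNReal.tsum_le_tsum hterm
    _ = (∑' b : ℕ, ((b : ℝ≥0∞)) ^ (q + 1) * μ {ω | Y 1 ω = b})
        + ((j : ℝ≥0∞) * E) * ∑' b : ℕ, ((b : ℝ≥0∞)) ^ q * μ {ω | Y 1 ω = b} := by
        rw [ENNReal.tsum_add, ENNReal.tsum_mul_left]
    _ = (∑' b : ℕ, ((b : ℝ≥0∞)) ^ (q + 1) * μ {ω | Y 1 ω = b})
        + (j : ℝ≥0∞) * E * ∑' b : ℕ, ((b : ℝ≥0∞)) ^ q * μ {ω | Y 1 ω = b} := by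
        rw [mul_assoc]
end

section
/- Let b ≥ 1 and let ℓ_1,…,ℓ_b and r_1,…,r_b be positive integers. For i∈[b] and positive integers ℓ', r', define α_{L,i}(ℓ') = C(ℓ'−1+[i=1 and ℓ_1>1]+[i=b and r_b=1], ℓ_i−1+[i=b and r_b=1]) and α_{R,i}(r') = C(r'−1+[i=b and r_b>1]+[i=1 and ℓ_1=1], r_i−1+[i=1 and ℓ_1=1]), where [·] denotes the indicator (0 or 1) and C the binomial coefficient. If L and R are random variables with P(L=ℓ)=P(R=ℓ)=2^{−ℓ} for every integer ℓ≥1, then for every i∈[b]: E[α_{L,i}(L)] = (1+[i=1 and ℓ_1>1])·(1+[i=b and r_b=1]) and E[α_{R,i}(R)] = (1+[i=b and r_b>1])·(1+[i=1 and ℓ_1=1]). -/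
/-- `α_{L,i}(ℓ') = C(ℓ'−1+[i=1 ∧ ℓ_1>1]+[i=b ∧ r_b=1], ℓ_i−1+[i=b ∧ r_b=1])`, where the
blocks are indexed by `i : Fin b` (so `i = 1` in the paper corresponds to `(i : ℕ) = 0`
and `i = b` to `(i : ℕ) = b − 1`). -/

lemma summable_aux (k : ℕ) :
    Summable (fun n : ℕ => ((1:ℝ)/2)^(n+1) * (n.choose k : ℝ)) := by
  have hn : ‖(1:ℝ)/2‖ < 1 := by
    rw [Real.norm_eq_abs, abs_of_nonneg (by norm_num)]; norm_num
  have h := summable_pow_mul_geometric_of_norm_lt_one (R := ℝ) k hn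
  refine Summable.of_nonneg_of_le (fun n => by positivity) (fun n => ?_) h
  have h1 : (n.choose k : ℝ) ≤ (n : ℝ)^k := by
    exact_mod_cast Nat.cast_le.mpr (Nat.choose_le_pow n k)
  have h2 : ((1:ℝ)/2)^(n+1) ≤ ((1:ℝ)/2)^n :=
    pow_le_pow_of_le_one (by norm_num) (by norm_num) (Nat.le_succ n)
  calc ((1:ℝ)/2)^(n+1) * (n.choose k : ℝ) ≤ ((1:ℝ)/2)^n * (n:ℝ)^k :=
        mul_le_mul h2 h1 (by positivity) (by positivity)
    _ = (n:ℝ)^k * ((1:ℝ)/2)^n := mul_comm _ _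

lemma hasSum_choose_half (k : ℕ) :
    HasSum (fun n : ℕ => ((1:ℝ)/2)^(n+1) * (n.choose k : ℝ)) 1 := by
  induction k with
  | zero =>
      have h := hasSum_geometric_of_lt_one (r := (1:ℝ)/2) (by norm_num) (by norm_num)
      have h2 := h.mul_left ((1:ℝ)/2)
      simp only [Nat.choose_zero_right, Nat.cast_one, mul_one]
      convert h2 using 2 with n
      · rfl
      · ring
      · norm_num
  | succ k ih =>
      obtain ⟨T, hsum⟩ := summable_aux (k+1)
      have hf0 : ∑ i ∈ Finset.range 1,
          ((1:ℝ)/2)^(i+1) * (i.choose (k+1) : ℝ) = 0 := by simp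
      have hshift : HasSum
          (fun n : ℕ => ((1:ℝ)/2)^((n+1)+1) * ((n+1).choose (k+1) : ℝ)) T := by
        rw [hasSum_nat_add_iff
          (f := fun n : ℕ => ((1:ℝ)/2)^(n+1) * (n.choose (k+1) : ℝ)) 1, hf0, add_zero]
        exact hsum
      have hcomb : HasSum (fun n : ℕ => ((1:ℝ)/2)^((n+1)+1) * ((n+1).choose (k+1) : ℝ))
          ((1/2) * (1 + T)) := by
        have h1 : HasSum (fun n : ℕ => (1/2) * (((1:ℝ)/2)^(n+1) * (n.choose k : ℝ)
            + ((1:ℝ)/2)^(n+1) * (n.choose (k+1) : ℝ))) ((1/2) * (1 + T)) :=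
          (ih.add hsum).mul_left _
        convert h1 using 2 with n
        rw [Nat.choose_succ_succ]
        push_cast
        ring
      have hT1 : T = 1 := by
        have := hshift.unique hcomb
        linarith
      rwa [hT1] at hsum

lemma hasSum_choose_shift (a k : ℕ) (hak : a ≤ k) :
    HasSum (fun x : ℕ => ((1:ℝ)/2)^(x+1) * ((x + a).choose k : ℝ)) (2^a) := by
  have h := hasSum_choose_half k
  have hz : ∑ i ∈ Finset.range a, ((1:ℝ)/2)^(i+1) * (i.choose k : ℝ) = 0 := by
    apply Finset.sum_eq_zero
    intro i hi
    have : i.choose k = 0 :=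
      Nat.choose_eq_zero_of_lt (lt_of_lt_of_le (Finset.mem_range.mp hi) hak)
    simp [this]
  have hshift : HasSum (fun x : ℕ => ((1:ℝ)/2)^((x+a)+1) * ((x + a).choose k : ℝ)) 1 := by
    rw [hasSum_nat_add_iff (f := fun n : ℕ => ((1:ℝ)/2)^(n+1) * (n.choose k : ℝ)) a,
      hz, add_zero]
    exact h
  have hm := hshift.mul_left ((2:ℝ)^a)
  rw [mul_one] at hm
  convert hm using 2 with x
  · rfl
  have he : ((1:ℝ)/2)^(x+a+1) = ((1:ℝ)/2)^a * ((1:ℝ)/2)^(x+1) := by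
    rw [← pow_add]; ring_nf
  have h21 : (2:ℝ)^a * ((1:ℝ)/2)^a = 1 := by rw [← mul_pow]; norm_num
  rw [he]
  linear_combination (-(((1:ℝ)/2)^(x+1) * (((x+a).choose k : ℕ) : ℝ))) * h21
lemma key_part (P1 P2 : Prop) [Decidable P1] [Decidable P2] (k0 : ℕ)
    (h : (if P1 then 1 else 0) ≤ k0) :
    (∑' x : ℕ, ((1:ℝ)/2)^(x+1) *
      (((x + 1 - 1 + (if P1 then 1 else 0) + (if P2 then 1 else 0)).choose
        (k0 + (if P2 then 1 else 0))) : ℝ))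
      = (1 + if P1 then (1:ℝ) else 0) * (1 + if P2 then (1:ℝ) else 0) := by
  set c1 : ℕ := if P1 then 1 else 0 with hc1
  set c2 : ℕ := if P2 then 1 else 0 with hc2
  have hs := hasSum_choose_shift (c1 + c2) (k0 + c2) (by omega)
  have h1 : (∑' x : ℕ, ((1:ℝ)/2)^(x+1) * (((x + 1 - 1 + c1 + c2).choose (k0 + c2)) : ℝ))
      = (2:ℝ)^(c1+c2) := by
    rw [← hs.tsum_eq]
    apply tsum_congr
    intro x
    have hx : x + 1 - 1 + c1 + c2 = x + (c1 + c2) := by omega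
    rw [hx]
  rw [h1, hc1, hc2]
  split_ifs <;> norm_num

def alphaL {b : ℕ} (ℓ r : Fin b → ℕ) (i : Fin b) (x : ℕ) : ℕ :=
  Nat.choose
    (x - 1 + (if (i : ℕ) = 0 ∧ 1 < ℓ i then 1 else 0) +
      (if (i : ℕ) = b - 1 ∧ r i = 1 then 1 else 0))
    (ℓ i - 1 + (if (i : ℕ) = b - 1 ∧ r i = 1 then 1 else 0))

/-- `α_{R,i}(r') = C(r'−1+[i=b ∧ r_b>1]+[i=1 ∧ ℓ_1=1], r_i−1+[i=1 ∧ ℓ_1=1])`. -/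
def alphaR {b : ℕ} (ℓ r : Fin b → ℕ) (i : Fin b) (x : ℕ) : ℕ :=
  Nat.choose
    (x - 1 + (if (i : ℕ) = b - 1 ∧ 1 < r i then 1 else 0) +
      (if (i : ℕ) = 0 ∧ ℓ i = 1 then 1 else 0))
    (r i - 1 + (if (i : ℕ) = 0 ∧ ℓ i = 1 then 1 else 0))

/-- If `L` and `R` are geometric, `P(L = x) = P(R = x) = 2^{−x}` for `x ≥ 1`, then
`E[α_{L,i}(L)] = (1+[i=1 ∧ ℓ_1>1])(1+[i=b ∧ r_b=1])` and
`E[α_{R,i}(R)] = (1+[i=b ∧ r_b>1])(1+[i=1 ∧ ℓ_1=1])`, the expectations being the sums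
`Σ_{x≥1} 2^{−x} α(x)`. -/
theorem expectation_alpha_geometric (b : ℕ) (hb : 1 ≤ b) (ℓ r : Fin b → ℕ)
    (hℓ : ∀ i, 1 ≤ ℓ i) (hr : ∀ i, 1 ≤ r i) (i : Fin b) :
    (∑' x : ℕ, ((1 : ℝ) / 2) ^ (x + 1) * (alphaL ℓ r i (x + 1) : ℝ)) =
      (1 + if (i : ℕ) = 0 ∧ 1 < ℓ i then (1 : ℝ) else 0) *
        (1 + if (i : ℕ) = b - 1 ∧ r i = 1 then (1 : ℝ) else 0) ∧
    (∑' x : ℕ, ((1 : ℝ) / 2) ^ (x + 1) * (alphaR ℓ r i (x + 1) : ℝ)) =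
      (1 + if (i : ℕ) = b - 1 ∧ 1 < r i then (1 : ℝ) else 0) *
        (1 + if (i : ℕ) = 0 ∧ ℓ i = 1 then (1 : ℝ) else 0) := by
  constructor
  · have hk : (if (i : ℕ) = 0 ∧ 1 < ℓ i then 1 else 0) ≤ ℓ i - 1 := by
      split_ifs with h
      · omega
      · exact Nat.zero_le _
    have := key_part ((i : ℕ) = 0 ∧ 1 < ℓ i) ((i : ℕ) = b - 1 ∧ r i = 1) (ℓ i - 1) hk
    simpa [alphaL] using this
  · have hk : (if (i : ℕ) = b - 1 ∧ 1 < r i then 1 else 0) ≤ r i - 1 := by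
      split_ifs with h
      · omega
      · exact Nat.zero_le _
    have := key_part ((i : ℕ) = b - 1 ∧ 1 < r i) ((i : ℕ) = 0 ∧ ℓ i = 1) (r i - 1) hk
    simpa [alphaR] using this
end
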